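/- arXiv:1802.07777 — 5 statements merged into one kernel-verified Lean document; each statement's English description precedes it below -/
import Mathlib

section
/- Let K and L be convex bodies in ℝ^n with the origin in their interiors. Then the polar body of their Minkowski average satisfies |((K+L)/2)°| ≤ (|K°| + |L°|)/2, with equality if and only if K = L. -/
open MeasureTheory Metric Filter Set ENNReal
open scoped Pointwise

noncomputable section

abbrev E (n : ℕ) := EuclideanSpace ℝ (Fin n)

abbrev Sph (n : ℕ) := ↥(Metric.sphere (0 : E n) 1)

/-- Convex body in `ℝⁿ` with the origin in its interior. -/
def IsBody {n : ℕ} (K : Set (E n)) : Prop :=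
  IsCompact K ∧ Convex ℝ K ∧ 0 ∈ interior K

/-- Support function of a set. -/
def supportFn {n : ℕ} (K : Set (E n)) (u : E n) : ℝ :=
  sSup ((fun x => (inner ℝ x u : ℝ)) '' K)

/-- Polar body. -/
def polarBody {n : ℕ} (K : Set (E n)) : Set (E n) :=
  {y | ∀ x ∈ K, (inner ℝ x y : ℝ) ≤ 1}

/-- Radial function. -/
def radialFn {n : ℕ} (K : Set (E n)) (u : E n) : ℝ :=
  sSup {r : ℝ | 0 ≤ r ∧ r • u ∈ K}

/-- Volume of the unit ball in `ℝⁿ`. -/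
def unitBallVol (n : ℕ) : ℝ≥0∞ := volume (Metric.closedBall (0 : E n) 1)

namespace PolarAux
variable {n : ℕ}

lemma inner_cont (y : E n) : Continuous fun x : E n => (inner ℝ x y : ℝ) :=
  continuous_inner.comp (continuous_id.prodMk continuous_const)

lemma inner_cont' (x : E n) : Continuous fun y : E n => (inner ℝ x y : ℝ) :=
  continuous_inner.comp (continuous_const.prodMk continuous_id)

lemma bddAbove_img {K : Set (E n)} (hK : IsCompact K) (y : E n) :
    BddAbove ((fun x => (inner ℝ x y : ℝ)) '' K) :=
  (hK.image (inner_cont y)).bddAbove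

lemma le_supportFn {K : Set (E n)} (hK : IsCompact K) {x : E n} (hx : x ∈ K) (y : E n) :
    (inner ℝ x y : ℝ) ≤ supportFn K y :=
  le_csSup (bddAbove_img hK y) ⟨x, hx, rfl⟩

lemma supportFn_le {K : Set (E n)} (hne : K.Nonempty) {y : E n} {a : ℝ}
    (h : ∀ x ∈ K, (inner ℝ x y : ℝ) ≤ a) : supportFn K y ≤ a :=
  csSup_le (hne.image _) (by rintro z ⟨x, hx, rfl⟩; exact h x hx)

lemma supportFn_nonneg {K : Set (E n)} (hK : IsCompact K) (h0 : (0:E n) ∈ K) (y : E n) :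
    0 ≤ supportFn K y := by
  have := le_supportFn hK h0 y
  simpa using this

lemma supportFn_le_mul_norm {K : Set (E n)} (hne : K.Nonempty) {R : ℝ}
    (hsub : K ⊆ closedBall 0 R) (y : E n) : supportFn K y ≤ R * ‖y‖ := by
  refine supportFn_le hne fun x hx => ?_
  calc (inner ℝ x y : ℝ) ≤ ‖x‖ * ‖y‖ := real_inner_le_norm x y
    _ ≤ R * ‖y‖ := by
        have hx' : ‖x‖ ≤ R := by simpa [dist_eq_norm] using hsub hx
        exact mul_le_mul_of_nonneg_right hx' (norm_nonneg y)

lemma mul_norm_le_supportFn {K : Set (E n)} (hK : IsCompact K) {r : ℝ} (hr : 0 ≤ r)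
    (hsub : closedBall (0 : E n) r ⊆ K) (y : E n) : r * ‖y‖ ≤ supportFn K y := by
  rcases eq_or_ne y 0 with rfl | hy
  · simpa using supportFn_nonneg hK (hsub (by simp [hr])) 0
  · have hyn : (0:ℝ) < ‖y‖ := norm_pos_iff.2 hy
    have hx : (r / ‖y‖) • y ∈ K := by
      apply hsub
      simp only [mem_closedBall, dist_zero_right, norm_smul]
      rw [Real.norm_eq_abs, abs_of_nonneg (div_nonneg hr hyn.le)]
      rw [div_mul_cancel₀ _ hyn.ne']
    have := le_supportFn hK hx y
    rw [real_inner_smul_left, real_inner_self_eq_norm_mul_norm] at this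
    have e : r / ‖y‖ * (‖y‖ * ‖y‖) = r * ‖y‖ := by field_simp
    linarith

lemma supportFn_smul_arg {K : Set (E n)} {c : ℝ} (hc : 0 ≤ c) (u : E n) :
    supportFn K (c • u) = c * supportFn K u := by
  unfold supportFn
  have h0 : (fun x : E n => (inner ℝ x (c • u) : ℝ)) = fun x => c * (inner ℝ x u : ℝ) :=
    funext fun x => real_inner_smul_right x u c
  have h1 : (fun x : E n => (inner ℝ x (c • u) : ℝ)) '' K
      = c • ((fun x : E n => (inner ℝ x u : ℝ)) '' K) := by
    rw [h0, ← Set.image_smul, Set.image_image]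
    simp only [smul_eq_mul]
  rw [h1, Real.sSup_smul_of_nonneg hc, smul_eq_mul]

lemma supportFn_smul_body {K : Set (E n)} {c : ℝ} (hc : 0 ≤ c) (u : E n) :
    supportFn (c • K) u = c * supportFn K u := by
  unfold supportFn
  have h1 : (fun x : E n => (inner ℝ x u : ℝ)) '' (c • K)
      = c • ((fun x : E n => (inner ℝ x u : ℝ)) '' K) := by
    rw [← Set.image_smul, Set.image_image, ← Set.image_smul, Set.image_image]
    exact Set.image_congr fun a _ => by
      rw [smul_eq_mul, real_inner_smul_left]
  rw [h1, Real.sSup_smul_of_nonneg hc, smul_eq_mul]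

lemma supportFn_add {K L : Set (E n)} (hKc : IsCompact K) (hLc : IsCompact L)
    (hKne : K.Nonempty) (hLne : L.Nonempty) (u : E n) :
    supportFn (K + L) u = supportFn K u + supportFn L u := by
  unfold supportFn
  have h1 : (fun x : E n => (inner ℝ x u : ℝ)) '' (K + L)
      = ((fun x : E n => (inner ℝ x u : ℝ)) '' K) + ((fun x : E n => (inner ℝ x u : ℝ)) '' L) := by
    ext z
    simp only [Set.mem_image, Set.mem_add]
    constructor
    · rintro ⟨x, ⟨a, ha, b, hb, rfl⟩, rfl⟩
      exact ⟨_, ⟨a, ha, rfl⟩, _, ⟨b, hb, rfl⟩, (inner_add_left a b u).symm⟩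
    · rintro ⟨_, ⟨a, ha, rfl⟩, _, ⟨b, hb, rfl⟩, rfl⟩
      exact ⟨a + b, ⟨a, ha, b, hb, rfl⟩, inner_add_left a b u⟩
  rw [h1, csSup_add (hKne.image _) (bddAbove_img hKc u) (hLne.image _) (bddAbove_img hLc u)]

lemma polarBody_eq {K : Set (E n)} (hK : IsCompact K) (hne : K.Nonempty) :
    polarBody K = {y | supportFn K y ≤ 1} := by
  ext y
  constructor
  · intro h
    exact supportFn_le hne h
  · intro h x hx
    exact (le_supportFn hK hx y).trans h

lemma supportFn_continuous {K : Set (E n)} (hK : IsCompact K) (hne : K.Nonempty) :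
    Continuous (supportFn K) := by
  obtain ⟨R, hR⟩ := hK.isBounded.subset_closedBall (0 : E n)
  have key : ∀ u v : E n, supportFn K u - supportFn K v ≤ R * ‖u - v‖ := by
    intro u v
    rw [sub_le_iff_le_add]
    refine supportFn_le hne fun x hx => ?_
    have hu : u = v + (u - v) := by abel
    have h1 : (inner ℝ x u : ℝ) = inner ℝ x v + inner ℝ x (u - v) := by
      rw [← inner_add_right, ← hu]
    rw [h1]
    have h2 : (inner ℝ x (u - v) : ℝ) ≤ R * ‖u - v‖ := by
      calc (inner ℝ x (u - v) : ℝ) ≤ ‖x‖ * ‖u - v‖ := real_inner_le_norm _ _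
        _ ≤ R * ‖u - v‖ := by
            have hx' : ‖x‖ ≤ R := by simpa [dist_eq_norm] using hR hx
            exact mul_le_mul_of_nonneg_right hx' (norm_nonneg _)
    have h3 : (inner ℝ x v : ℝ) ≤ supportFn K v := le_supportFn hK hx v
    linarith
  have : LipschitzWith (Real.toNNReal R) (supportFn K) := by
    refine LipschitzWith.of_dist_le_mul fun u v => ?_
    rw [Real.dist_eq, abs_sub_le_iff]
    have hR0 : (0:ℝ) ≤ R := by
      obtain ⟨x, hx⟩ := hne
      have := hR hx
      simp only [mem_closedBall] at this
      exact dist_nonneg.trans this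
    have hcoe : ((Real.toNNReal R : NNReal) : ℝ) = R := Real.coe_toNNReal R hR0
    rw [hcoe, dist_eq_norm]
    exact ⟨key u v, by simpa [norm_sub_rev] using key v u⟩
  exact this.continuous

lemma subset_of_supportFn_le {K L : Set (E n)} (hK : IsCompact K) (hL : IsCompact L)
    (hLconv : Convex ℝ L) (hLne : L.Nonempty)
    (h : ∀ y, supportFn K y ≤ supportFn L y) : K ⊆ L := by
  intro x hx
  by_contra hxL
  obtain ⟨f, u, hfu, hux⟩ := geometric_hahn_banach_closed_point hLconv hL.isClosed hxL
  set w := (InnerProductSpace.toDual ℝ (E n)).symm f with hw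
  have hwf : ∀ z : E n, (inner ℝ w z : ℝ) = f z := fun z => by
    rw [hw, ← InnerProductSpace.toDual_apply_apply, LinearIsometryEquiv.apply_symm_apply]
  have h1 : supportFn L w ≤ u := supportFn_le hLne fun z hz => by
    rw [real_inner_comm, hwf z]; exact (hfu z hz).le
  have h2 : (inner ℝ x w : ℝ) ≤ supportFn K w := le_supportFn hK hx w
  rw [real_inner_comm, hwf x] at h2
  have := h w
  linarith



def cgam (n : ℕ) : ℝ≥0∞ := ∫⁻ t in Ioo (0:ℝ) 1, ENNReal.ofReal ((-Real.log t)^n)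

lemma sublevel_smul (h : E n → ℝ)
    (hhom : ∀ (s : ℝ), 0 < s → ∀ y, h (s • y) = s * h y) {s : ℝ} (hs : 0 < s) :
    {y : E n | h y ≤ s} = s • {y : E n | h y ≤ 1} := by
  ext y
  rw [Set.mem_smul_set_iff_inv_smul_mem₀ hs.ne']
  simp only [Set.mem_setOf_eq]
  rw [hhom s⁻¹ (by positivity) y, inv_mul_le_iff₀ hs, mul_one]

lemma sublevel_volume (h : E n → ℝ)
    (hhom : ∀ (s : ℝ), 0 < s → ∀ y, h (s • y) = s * h y) {s : ℝ} (hs : 0 < s) :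
    volume {y : E n | h y ≤ s} = ENNReal.ofReal (s ^ n) * volume {y : E n | h y ≤ 1} := by
  rw [sublevel_smul h hhom hs, Measure.addHaar_smul_of_nonneg volume hs.le,
    finrank_euclideanSpace_fin]

lemma lintegral_exp_neg (h : E n → ℝ) (hcont : Continuous h)
    (hnn : ∀ y, 0 ≤ h y)
    (hhom : ∀ (s : ℝ), 0 < s → ∀ y, h (s • y) = s * h y) :
    ∫⁻ y, ENNReal.ofReal (Real.exp (-h y)) = cgam n * volume {y : E n | h y ≤ 1} := by
  have hm : AEMeasurable (fun y : E n => Real.exp (-h y)) volume :=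
    (Real.continuous_exp.comp hcont.neg).aemeasurable
  rw [lintegral_eq_lintegral_meas_le volume (Eventually.of_forall fun y => (Real.exp_pos _).le) hm]
  set v := volume {y : E n | h y ≤ 1} with hv
  have key : ∀ᵐ t ∂(volume.restrict (Ioi (0:ℝ))),
      volume {y : E n | t ≤ Real.exp (-h y)}
        = (Ioo (0:ℝ) 1).indicator (fun t => ENNReal.ofReal ((-Real.log t)^n) * v) t := by
    have h1 : ∀ᵐ t ∂(volume.restrict (Ioi (0:ℝ))), t ≠ 1 := by
      refine ae_iff.2 ?_
      have he : {t : ℝ | ¬ t ≠ 1} = {1} := by ext; simp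
      rw [he]
      exact le_antisymm ((Measure.restrict_apply_le _ _).trans (by simp)) (by simp)
    filter_upwards [ae_restrict_mem measurableSet_Ioi, h1] with t ht ht1
    have ht0 : (0:ℝ) < t := ht
    rcases lt_or_gt_of_ne ht1 with htlt | htgt
    · have hset : {y : E n | t ≤ Real.exp (-h y)} = {y : E n | h y ≤ -Real.log t} := by
        ext y
        rw [Set.mem_setOf_eq, Set.mem_setOf_eq, ← Real.log_le_iff_le_exp ht0, le_neg]
      have hlog : 0 < -Real.log t := by
        have := Real.log_neg ht0 htlt
        linarith
      rw [hset, sublevel_volume h hhom hlog, Set.indicator_of_mem (Set.mem_Ioo.2 ⟨ht0, htlt⟩)]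
    · have hset : {y : E n | t ≤ Real.exp (-h y)} = ∅ := by
        ext y
        simp only [Set.mem_setOf_eq, Set.mem_empty_iff_false, iff_false, not_le]
        calc Real.exp (-h y) ≤ Real.exp 0 := Real.exp_le_exp.2 (by linarith [hnn y])
          _ = 1 := Real.exp_zero
          _ < t := htgt
      rw [hset, Set.indicator_of_notMem (fun hmem => absurd hmem.2 (by linarith))]
      simp
  rw [lintegral_congr_ae key, lintegral_indicator measurableSet_Ioo,
    Measure.restrict_restrict measurableSet_Ioo]
  have hint : Ioo (0:ℝ) 1 ∩ Ioi 0 = Ioo 0 1 := inter_eq_left.2 (fun t ht => ht.1)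
  rw [hint, cgam]
  exact lintegral_mul_const v ((Real.measurable_log.neg.pow_const n).ennreal_ofReal)

lemma cgam_pos : 0 < cgam n := by
  have hsub : Ioo (0:ℝ) (Real.exp (-1)) ⊆ Ioo 0 1 :=
    Ioo_subset_Ioo le_rfl (by
      have : Real.exp (-1) < 1 := by
        rw [← Real.exp_zero]; exact Real.exp_lt_exp.2 (by norm_num)
      linarith)
  have hle : volume (Ioo (0:ℝ) (Real.exp (-1))) ≤ cgam n := by
    rw [cgam]
    calc volume (Ioo (0:ℝ) (Real.exp (-1)))
        = ∫⁻ _ in Ioo (0:ℝ) (Real.exp (-1)), 1 := by rw [setLIntegral_one]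
      _ ≤ ∫⁻ t in Ioo (0:ℝ) (Real.exp (-1)), ENNReal.ofReal ((-Real.log t)^n) := by
          refine setLIntegral_mono ((Real.measurable_log.neg.pow_const n).ennreal_ofReal) ?_
          intro t ht
          have hlog : 1 ≤ -Real.log t := by
            have h2 : Real.log t < Real.log (Real.exp (-1)) :=
              Real.log_lt_log ht.1 ht.2
            rw [Real.log_exp] at h2
            linarith
          have : (1:ℝ) ≤ (-Real.log t)^n := one_le_pow₀ hlog
          calc (1:ℝ≥0∞) = ENNReal.ofReal 1 := by simp
            _ ≤ ENNReal.ofReal ((-Real.log t)^n) := ENNReal.ofReal_le_ofReal this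
      _ ≤ cgam n := by
          rw [cgam]
          exact lintegral_mono_set hsub
  have hpos : 0 < volume (Ioo (0:ℝ) (Real.exp (-1))) := by
    rw [Real.volume_Ioo]
    simp only [sub_zero]
    exact ENNReal.ofReal_pos.2 (Real.exp_pos _)
  exact lt_of_lt_of_le hpos hle

lemma cgam_lt_top : cgam n < ⊤ := by
  set m : ℝ := 2 * n + 2 with hm
  have hm0 : (0:ℝ) < m := by positivity
  have hbound : ∀ t ∈ Ioo (0:ℝ) 1,
      ENNReal.ofReal ((-Real.log t)^n) ≤
        ENNReal.ofReal (m ^ n) * ENNReal.ofReal (t ^ (-(2:ℝ)⁻¹)) := by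
    intro t ht
    rw [← ENNReal.ofReal_mul (by positivity)]
    apply ENNReal.ofReal_le_ofReal
    set s : ℝ := -Real.log t with hs
    have hs0 : 0 ≤ s := by
      have := Real.log_nonpos ht.1.le ht.2.le
      simp only [hs]; linarith
    have h1 : s ≤ m * Real.exp (s / m) := by
      have : s / m ≤ Real.exp (s / m) := (Real.add_one_le_exp _).trans' (by linarith [div_nonneg hs0 hm0.le])
      calc s = m * (s / m) := by field_simp
        _ ≤ m * Real.exp (s / m) := by nlinarith
    have h2 : s ^ n ≤ (m * Real.exp (s / m)) ^ n := pow_le_pow_left₀ hs0 h1 n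
    have h3 : (m * Real.exp (s / m)) ^ n = m ^ n * Real.exp (s / m) ^ n := mul_pow _ _ _
    have h4 : Real.exp (s / m) ^ n = Real.exp (s * n / m) := by
      rw [← Real.exp_nat_mul]; ring_nf
    have h5 : Real.exp (s * n / m) ≤ Real.exp (s / 2) := by
      apply Real.exp_le_exp.2
      rw [div_le_div_iff₀ hm0 (by norm_num : (0:ℝ) < 2)]
      nlinarith
    have h6 : Real.exp (s / 2) = t ^ (-(2:ℝ)⁻¹) := by
      rw [Real.rpow_def_of_pos ht.1]
      congr 1
      simp only [hs]
      ring
    calc s ^ n ≤ m ^ n * Real.exp (s / m) ^ n := by rw [← h3]; exact h2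
      _ = m ^ n * Real.exp (s * n / m) := by rw [h4]
      _ ≤ m ^ n * Real.exp (s / 2) := by nlinarith [Real.exp_pos (s * n / m), pow_pos hm0 n]
      _ = m ^ n * t ^ (-(2:ℝ)⁻¹) := by rw [h6]
  have hrpow : ∫⁻ t in Ioo (0:ℝ) 1, ENNReal.ofReal (t ^ (-(2:ℝ)⁻¹)) < ⊤ := by
    have hint : IntervalIntegrable (fun t : ℝ => t ^ (-(2:ℝ)⁻¹)) volume 0 1 :=
      intervalIntegral.intervalIntegrable_rpow' (by norm_num)
    have hio : IntegrableOn (fun t : ℝ => t ^ (-(2:ℝ)⁻¹)) (Ioo (0:ℝ) 1) volume := by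
      refine IntegrableOn.mono_set ?_ Ioo_subset_Ioc_self
      rwa [← intervalIntegrable_iff_integrableOn_Ioc_of_le zero_le_one]
    exact hio.setLIntegral_lt_top
  calc cgam n ≤ ∫⁻ t in Ioo (0:ℝ) 1,
        ENNReal.ofReal (m ^ n) * ENNReal.ofReal (t ^ (-(2:ℝ)⁻¹)) := by
        rw [cgam]; exact setLIntegral_mono' measurableSet_Ioo hbound
    _ = ENNReal.ofReal (m ^ n) * ∫⁻ t in Ioo (0:ℝ) 1, ENNReal.ofReal (t ^ (-(2:ℝ)⁻¹)) :=
        lintegral_const_mul' _ _ ENNReal.ofReal_ne_top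
    _ < ⊤ := ENNReal.mul_lt_top ENNReal.ofReal_lt_top hrpow



lemma exp_avg (a b : ℝ) :
    Real.exp (-(2⁻¹ * (a + b))) ≤ (Real.exp (-a) + Real.exp (-b)) / 2 ∧
    (Real.exp (-(2⁻¹ * (a + b))) = (Real.exp (-a) + Real.exp (-b)) / 2 ↔ a = b) := by
  have ha : Real.exp (-a) = Real.exp (-(a/2)) * Real.exp (-(a/2)) := by
    rw [← Real.exp_add]; ring_nf
  have hb : Real.exp (-b) = Real.exp (-(b/2)) * Real.exp (-(b/2)) := by
    rw [← Real.exp_add]; ring_nf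
  have hab : Real.exp (-(2⁻¹ * (a + b))) = Real.exp (-(a/2)) * Real.exp (-(b/2)) := by
    rw [← Real.exp_add]; ring_nf
  have key : (Real.exp (-a) + Real.exp (-b)) / 2 - Real.exp (-(2⁻¹ * (a + b)))
      = (Real.exp (-(a/2)) - Real.exp (-(b/2)))^2 / 2 := by
    rw [ha, hb, hab]; ring
  constructor
  · nlinarith [sq_nonneg (Real.exp (-(a/2)) - Real.exp (-(b/2)))]
  · constructor
    · intro heq
      have h0 : (Real.exp (-(a/2)) - Real.exp (-(b/2)))^2 / 2 = 0 := by
        rw [← key, heq]; ring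
      have h1 : Real.exp (-(a/2)) = Real.exp (-(b/2)) := by
        have := pow_eq_zero_iff (n := 2) (by norm_num) |>.1 (by linarith : (Real.exp (-(a/2)) - Real.exp (-(b/2)))^2 = 0)
        linarith
      have := Real.exp_eq_exp.1 h1
      linarith
    · rintro rfl
      rw [ha, hab]
      ring

lemma ofReal_exp_avg (a b : ℝ) :
    ENNReal.ofReal (Real.exp (-(2⁻¹ * (a + b)))) ≤
      (ENNReal.ofReal (Real.exp (-a)) + ENNReal.ofReal (Real.exp (-b))) / 2 ∧
    (ENNReal.ofReal (Real.exp (-(2⁻¹ * (a + b)))) =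
      (ENNReal.ofReal (Real.exp (-a)) + ENNReal.ofReal (Real.exp (-b))) / 2 ↔ a = b) := by
  have h2 : (ENNReal.ofReal (Real.exp (-a)) + ENNReal.ofReal (Real.exp (-b))) / 2
      = ENNReal.ofReal ((Real.exp (-a) + Real.exp (-b)) / 2) := by
    rw [← ENNReal.ofReal_add (Real.exp_pos _).le (Real.exp_pos _).le,
      ENNReal.ofReal_div_of_pos (by norm_num : (0:ℝ) < 2)]
    norm_num
  obtain ⟨hle, hiff⟩ := exp_avg a b
  rw [h2]
  refine ⟨ENNReal.ofReal_le_ofReal hle, ?_⟩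
  rw [ENNReal.ofReal_eq_ofReal_iff (Real.exp_pos _).le (by positivity)]
  exact hiff

end PolarAux

open PolarAux

theorem polar_volume_average {n : ℕ}
    (K L : Set (E n)) (hK : IsBody K) (hL : IsBody L) :
    volume (polarBody ((2⁻¹ : ℝ) • (K + L))) ≤
        (volume (polarBody K) + volume (polarBody L)) / 2 ∧
      (volume (polarBody ((2⁻¹ : ℝ) • (K + L))) =
          (volume (polarBody K) + volume (polarBody L)) / 2 ↔ K = L) := by
  classical
  obtain ⟨hKc, hKconv, hK0⟩ := hK
  obtain ⟨hLc, hLconv, hL0⟩ := hL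
  have hK0' : (0:E n) ∈ K := interior_subset hK0
  have hL0' : (0:E n) ∈ L := interior_subset hL0
  have hKne : K.Nonempty := ⟨0, hK0'⟩
  have hLne : L.Nonempty := ⟨0, hL0'⟩
  -- inner ℝ radii
  have hinner : ∀ (S : Set (E n)), 0 ∈ interior S → ∃ r > (0:ℝ), closedBall (0:E n) r ⊆ S := by
    intro S hS
    obtain ⟨ε, hε, hsub⟩ := Metric.mem_nhds_iff.1 (mem_interior_iff_mem_nhds.1 hS)
    exact ⟨ε/2, by linarith, fun x hx => hsub (mem_ball.2 (lt_of_le_of_lt (mem_closedBall.1 hx) (by linarith)))⟩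
  obtain ⟨rK, hrK, hrKsub⟩ := hinner K hK0
  obtain ⟨rL, hrL, hrLsub⟩ := hinner L hL0
  set M := (2⁻¹ : ℝ) • (K + L) with hMdef
  have hMc : IsCompact M := (hKc.add hLc).smul _
  have h0KL : (0:E n) ∈ K + L := by simpa using Set.add_mem_add hK0' hL0'
  have hM0 : (0:E n) ∈ M := by
    rw [hMdef]
    exact ⟨0, h0KL, by simp⟩
  have hMne : M.Nonempty := ⟨0, hM0⟩
  -- support functions
  have hMsupp : ∀ y, supportFn M y = 2⁻¹ * (supportFn K y + supportFn L y) := fun y => by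
    rw [hMdef, supportFn_smul_body (by norm_num), supportFn_add hKc hLc hKne hLne]
  -- lemma A applications
  have FK := lintegral_exp_neg (supportFn K) (supportFn_continuous hKc hKne)
    (supportFn_nonneg hKc hK0') (fun s hs y => supportFn_smul_arg hs.le y)
  have FL := lintegral_exp_neg (supportFn L) (supportFn_continuous hLc hLne)
    (supportFn_nonneg hLc hL0') (fun s hs y => supportFn_smul_arg hs.le y)
  have FM := lintegral_exp_neg (supportFn M) (supportFn_continuous hMc hMne)
    (supportFn_nonneg hMc hM0) (fun s hs y => supportFn_smul_arg hs.le y)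
  rw [← polarBody_eq hKc hKne] at FK
  rw [← polarBody_eq hLc hLne] at FL
  rw [← polarBody_eq hMc hMne] at FM
  set vK := volume (polarBody K) with hvK
  set vL := volume (polarBody L) with hvL
  set vM := volume (polarBody M) with hvM
  -- finiteness of vM
  have hvMfin : vM < ⊤ := by
    have hsubM : polarBody M ⊆ closedBall (0:E n) (2⁻¹ * (rK + rL))⁻¹ := by
      intro y hy
      have h1 : supportFn M y ≤ 1 := by
        rw [polarBody_eq hMc hMne] at hy; exact hy
      have h2 : 2⁻¹ * (rK + rL) * ‖y‖ ≤ supportFn M y := by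
        rw [hMsupp y]
        have := mul_norm_le_supportFn hKc hrK.le hrKsub y
        have := mul_norm_le_supportFn hLc hrL.le hrLsub y
        nlinarith
      have hr0 : (0:ℝ) < 2⁻¹ * (rK + rL) := by positivity
      simp only [mem_closedBall, dist_zero_right]
      rw [inv_eq_one_div, le_div_iff₀ hr0]
      nlinarith
    exact lt_of_le_of_lt (measure_mono hsubM) (measure_closedBall_lt_top)
  -- pointwise inequality
  have hpt : ∀ y : E n, ENNReal.ofReal (Real.exp (-(supportFn M y))) ≤
      (ENNReal.ofReal (Real.exp (-(supportFn K y))) +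
       ENNReal.ofReal (Real.exp (-(supportFn L y)))) / 2 := fun y => by
    rw [hMsupp y]
    exact (ofReal_exp_avg _ _).1
  -- measurability
  have hfKm : Measurable (fun y : E n => ENNReal.ofReal (Real.exp (-(supportFn K y)))) :=
    (ENNReal.continuous_ofReal.comp (Real.continuous_exp.comp
      (supportFn_continuous hKc hKne).neg)).measurable
  have hfLm : Measurable (fun y : E n => ENNReal.ofReal (Real.exp (-(supportFn L y)))) :=
    (ENNReal.continuous_ofReal.comp (Real.continuous_exp.comp
      (supportFn_continuous hLc hLne).neg)).measurable
  have hfMm : Measurable (fun y : E n => ENNReal.ofReal (Real.exp (-(supportFn M y)))) :=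
    (ENNReal.continuous_ofReal.comp (Real.continuous_exp.comp
      (supportFn_continuous hMc hMne).neg)).measurable
  -- integral of RHS
  have hG : ∫⁻ y, (ENNReal.ofReal (Real.exp (-(supportFn K y))) +
       ENNReal.ofReal (Real.exp (-(supportFn L y)))) / 2
      = (cgam n * vK + cgam n * vL) / 2 := by
    simp_rw [div_eq_mul_inv]
    rw [lintegral_mul_const' _ _ (by norm_num : (2:ℝ≥0∞)⁻¹ ≠ ⊤),
      lintegral_add_left hfKm, FK, FL]
  have hmain_le : cgam n * vM ≤ (cgam n * vK + cgam n * vL) / 2 := by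
    rw [← FM, ← hG]
    exact lintegral_mono hpt
  have hfact : (cgam n * vK + cgam n * vL) / 2 = cgam n * ((vK + vL) / 2) := by
    rw [← mul_add, mul_div_assoc]
  have hcancel : ∀ x y : ℝ≥0∞, (cgam n * x ≤ cgam n * y ↔ x ≤ y) := fun x y =>
    ENNReal.mul_le_mul_iff_right (cgam_pos (n := n)).ne' (cgam_lt_top (n := n)).ne
  constructor
  · rw [← hcancel vM ((vK + vL)/2), ← hfact]
    exact hmain_le
  constructor
  · -- equality implies K = L
    intro heq
    have hIeq : ∫⁻ y, ENNReal.ofReal (Real.exp (-(supportFn M y)))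
        = ∫⁻ y, (ENNReal.ofReal (Real.exp (-(supportFn K y))) +
            ENNReal.ofReal (Real.exp (-(supportFn L y)))) / 2 := by
      rw [FM, hG, heq, hfact]
    have hfin : ∫⁻ y, ENNReal.ofReal (Real.exp (-(supportFn M y))) ≠ ⊤ := by
      rw [FM]
      exact (ENNReal.mul_lt_top cgam_lt_top hvMfin).ne
    -- conclude ae equality
    have hsub0 : ∫⁻ y, ((ENNReal.ofReal (Real.exp (-(supportFn K y))) +
        ENNReal.ofReal (Real.exp (-(supportFn L y)))) / 2
          - ENNReal.ofReal (Real.exp (-(supportFn M y)))) = 0 := by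
      rw [lintegral_sub hfMm hfin (Eventually.of_forall hpt), ← hIeq, tsub_self]
    have hmeas_diff : Measurable (fun y : E n =>
        (ENNReal.ofReal (Real.exp (-(supportFn K y))) +
        ENNReal.ofReal (Real.exp (-(supportFn L y)))) / 2
          - ENNReal.ofReal (Real.exp (-(supportFn M y)))) :=
      ((hfKm.add hfLm).div_const 2).sub hfMm
    have hae := (lintegral_eq_zero_iff hmeas_diff).1 hsub0
    have hae' : (fun y : E n => ENNReal.ofReal (Real.exp (-(supportFn M y))))
        =ᵐ[volume] (fun y => (ENNReal.ofReal (Real.exp (-(supportFn K y))) +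
            ENNReal.ofReal (Real.exp (-(supportFn L y)))) / 2) := by
      filter_upwards [hae] with y hy
      simp only [Pi.zero_apply] at hy
      have hle := hpt y
      have := tsub_eq_zero_iff_le.1 hy
      exact le_antisymm hle this
    have hcontM : Continuous (fun y : E n => ENNReal.ofReal (Real.exp (-(supportFn M y)))) :=
      ENNReal.continuous_ofReal.comp (Real.continuous_exp.comp
        (supportFn_continuous hMc hMne).neg)
    have hcontG : Continuous (fun y : E n => (ENNReal.ofReal (Real.exp (-(supportFn K y))) +
        ENNReal.ofReal (Real.exp (-(supportFn L y)))) / 2) := by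
      apply Continuous.comp (ENNReal.continuous_div_const 2 (by norm_num))
      exact (ENNReal.continuous_ofReal.comp (Real.continuous_exp.comp
        (supportFn_continuous hKc hKne).neg)).add
        (ENNReal.continuous_ofReal.comp (Real.continuous_exp.comp
        (supportFn_continuous hLc hLne).neg))
    have heq_fun := (Continuous.ae_eq_iff_eq volume hcontM hcontG).1 hae'
    have hsupp_eq : ∀ y, supportFn K y = supportFn L y := by
      intro y
      have := congrFun heq_fun y
      rw [hMsupp y] at this
      exact (ofReal_exp_avg (supportFn K y) (supportFn L y)).2.1 this
    have hKL : K = L := by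
      apply le_antisymm
      · exact subset_of_supportFn_le hKc hLc hLconv hLne (fun y => (hsupp_eq y).le)
      · exact subset_of_supportFn_le hLc hKc hKconv hKne (fun y => (hsupp_eq y).ge)
    exact hKL
  · -- K = L implies equality
    rintro rfl
    have hMK : M = K := by
      rw [hMdef]
      have h1 : K + K = (2:ℝ) • K := by
        have h := hKconv.add_smul (by norm_num : (0:ℝ) ≤ 1) (by norm_num : (0:ℝ) ≤ 1)
        norm_num at h
        exact h.symm
      rw [h1, smul_smul]
      norm_num [one_smul]
    rw [hvM, hvK] at *
    rw [hMK]
    rw [← two_mul, mul_comm, mul_div_assoc, ENNReal.div_self (by norm_num) (by norm_num), mul_one]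
end
end

section
/- Let K and L be convex bodies in ℝ^n with the origin in their interiors such that |K°| = |L°| = ω_n (the volume of the unit ball). If M = (K+L)/2 and vrad(M°) = (|M°|/ω_n)^{1/n} = 1, then K = L. -/
open MeasureTheory Metric Filter Set ENNReal
open scoped Pointwise

noncomputable section

section basics
variable {n : ℕ} {K : Set (E n)}

lemma IsBody.nonempty (hK : IsBody K) : K.Nonempty :=
  ⟨0, interior_subset hK.2.2⟩

lemma bddAbove_inner (hK : IsCompact K) (u : E n) :
    BddAbove ((fun x => (inner ℝ x u : ℝ)) '' K) :=
  (hK.image (continuous_id.inner continuous_const)).bddAbove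

lemma le_supportFn (hK : IsCompact K) {x : E n} (hx : x ∈ K) (u : E n) :
    (inner ℝ x u : ℝ) ≤ supportFn K u :=
  le_csSup (bddAbove_inner hK u) (mem_image_of_mem _ hx)

lemma supportFn_le (hne : K.Nonempty) {u : E n} {c : ℝ}
    (h : ∀ x ∈ K, (inner ℝ x u : ℝ) ≤ c) : supportFn K u ≤ c :=
  csSup_le (hne.image _) (by rintro _ ⟨x, hx, rfl⟩; exact h x hx)

lemma exists_supportFn_eq (hK : IsCompact K) (hne : K.Nonempty) (u : E n) :
    ∃ x ∈ K, supportFn K u = (inner ℝ x u : ℝ) := by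
  obtain ⟨x, hx, hmax⟩ := hK.exists_isMaxOn (f := fun x : E n => (inner ℝ x u : ℝ)) hne
    ((continuous_id.inner continuous_const).continuousOn)
  refine ⟨x, hx, le_antisymm (supportFn_le hne fun y hy => hmax hy) (le_supportFn hK hx u)⟩

lemma supportFn_smul_right (hK : IsCompact K) (hne : K.Nonempty) {r : ℝ} (hr : 0 ≤ r)
    (u : E n) : supportFn K (r • u) = r * supportFn K u := by
  obtain ⟨x, hx, hxe⟩ := exists_supportFn_eq hK hne u
  obtain ⟨y, hy, hye⟩ := exists_supportFn_eq hK hne (r • u)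
  have h1 : supportFn K (r • u) ≤ r * supportFn K u := by
    rw [hye, inner_smul_right]
    exact mul_le_mul_of_nonneg_left (le_supportFn hK hy u) hr
  have h2 : r * supportFn K u ≤ supportFn K (r • u) := by
    rw [hxe, ← inner_smul_right]
    exact le_supportFn hK hx _
  linarith

lemma supportFn_pos_of_ball {ε : ℝ} (hε : 0 < ε) (hball : closedBall (0 : E n) ε ⊆ K)
    (hK : IsCompact K) {u : E n} (hu : u ≠ 0) : ε * ‖u‖ ≤ supportFn K u := by
  have hx : (ε / ‖u‖) • u ∈ K := by
    apply hball
    simp [norm_smul, abs_of_nonneg (div_nonneg hε.le (norm_nonneg u)),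
      div_mul_cancel₀ _ (norm_ne_zero_iff.2 hu), hε.le, abs_of_pos hε]
  have := le_supportFn hK hx u
  rw [inner_smul_left, real_inner_self_eq_norm_sq] at this
  have hnu : ‖u‖ ≠ 0 := norm_ne_zero_iff.2 hu
  calc ε * ‖u‖ = ε / ‖u‖ * ‖u‖ ^ 2 := by
        field_simp [sq]
    _ ≤ supportFn K u := by simpa using this

lemma supportFn_lipschitz {R : ℝ} (hR : 0 ≤ R) (hKR : K ⊆ closedBall 0 R)
    (hK : IsCompact K) (hne : K.Nonempty) :
    LipschitzWith (Real.toNNReal R) (supportFn K) := by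
  have key : ∀ u v : E n, supportFn K u - supportFn K v ≤ R * ‖u - v‖ := by
    intro u v
    obtain ⟨x, hx, hxe⟩ := exists_supportFn_eq hK hne u
    have hxv := le_supportFn hK hx v
    have : (inner ℝ x u : ℝ) - inner ℝ x v ≤ R * ‖u - v‖ := by
      rw [← inner_sub_right]
      calc (inner ℝ x (u - v) : ℝ) ≤ ‖x‖ * ‖u - v‖ := real_inner_le_norm _ _
        _ ≤ R * ‖u - v‖ := by
            apply mul_le_mul_of_nonneg_right _ (norm_nonneg _)
            simpa using mem_closedBall_iff_norm.1 (hKR hx)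
    linarith [hxe ▸ this]
  refine LipschitzWith.of_dist_le_mul fun u v => ?_
  rw [Real.dist_eq, dist_eq_norm, Real.coe_toNNReal _ hR]
  rcases abs_cases (supportFn K u - supportFn K v) with ⟨h, _⟩ | ⟨h, _⟩
  · rw [h]; exact key u v
  · rw [h]; simpa [norm_sub_rev] using key v u

lemma supportFn_continuous {R : ℝ} (hR : 0 ≤ R) (hKR : K ⊆ closedBall 0 R)
    (hK : IsCompact K) (hne : K.Nonempty) : Continuous (supportFn K) :=
  (supportFn_lipschitz hR hKR hK hne).continuous

lemma polarBody_eq (hK : IsCompact K) (hne : K.Nonempty) :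
    polarBody K = {y | supportFn K y ≤ 1} := by
  ext y
  constructor
  · intro hy; exact supportFn_le hne hy
  · intro hy x hx; exact (le_supportFn hK hx y).trans hy

end basics

section sums
variable {n : ℕ} {K L : Set (E n)}

lemma supportFn_add (hK : IsCompact K) (hKne : K.Nonempty)
    (hL : IsCompact L) (hLne : L.Nonempty) (u : E n) :
    supportFn (K + L) u = supportFn K u + supportFn L u := by
  have hKL : IsCompact (K + L) := hK.add hL
  have hKLne : (K + L).Nonempty := hKne.add hLne
  apply le_antisymm
  · apply supportFn_le hKLne
    intro x hx
    obtain ⟨a, ha, b, hb, rfl⟩ := Set.mem_add.1 hx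
    rw [inner_add_left]
    exact add_le_add (le_supportFn hK ha u) (le_supportFn hL hb u)
  · obtain ⟨a, ha, hae⟩ := exists_supportFn_eq hK hKne u
    obtain ⟨b, hb, hbe⟩ := exists_supportFn_eq hL hLne u
    rw [hae, hbe, ← inner_add_left]
    exact le_supportFn hKL (Set.add_mem_add ha hb) u

lemma supportFn_smul_left {c : ℝ} (hc : 0 ≤ c) (u : E n) :
    supportFn (c • K) u = c * supportFn K u := by
  rcases eq_or_lt_of_le hc with rfl | hc
  · rcases K.eq_empty_or_nonempty with rfl | hne
    · simp [supportFn]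
    · have : (0 : ℝ) • K = {(0 : E n)} := by
        ext x
        simp only [Set.mem_smul_set, Set.mem_singleton_iff]
        constructor
        · rintro ⟨y, _, rfl⟩; simp
        · rintro rfl; exact ⟨hne.some, hne.some_mem, by simp⟩
      simp [supportFn, this, Set.image_singleton]
  · unfold supportFn
    have : (fun x => (inner ℝ x u : ℝ)) '' (c • K) = c • ((fun x => (inner ℝ x u : ℝ)) '' K) := by
      ext r
      simp only [Set.mem_image, Set.mem_smul_set]
      constructor
      · rintro ⟨x, ⟨y, hy, rfl⟩, rfl⟩
        exact ⟨inner ℝ y u, ⟨y, hy, rfl⟩, by rw [smul_eq_mul, real_inner_smul_left]⟩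
      · rintro ⟨r, ⟨y, hy, rfl⟩, rfl⟩
        exact ⟨c • y, ⟨y, hy, rfl⟩, by rw [smul_eq_mul, real_inner_smul_left]⟩
    rw [this, Real.sSup_smul_of_nonneg hc.le, smul_eq_mul]

end sums

section bodydata
variable {n : ℕ} {K L : Set (E n)}

lemma IsBody.exists_data (hK : IsBody K) :
    ∃ ε R : ℝ, 0 < ε ∧ 0 < R ∧ closedBall (0 : E n) ε ⊆ K ∧ K ⊆ closedBall 0 R := by
  obtain ⟨ε, hε, hball⟩ := Metric.mem_nhds_iff.1 (mem_interior_iff_mem_nhds.1 hK.2.2)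
  obtain ⟨R, hR, hKR⟩ := hK.1.isBounded.subset_closedBall_lt 0 0
  refine ⟨ε / 2, R, by positivity, hR, fun x hx => hball ?_, hKR⟩
  exact mem_ball_zero_iff.2 (lt_of_le_of_lt (mem_closedBall_zero_iff.1 hx) (by linarith))

lemma IsBody.supportFn_pos (hK : IsBody K) {u : E n} (hu : u ≠ 0) :
    0 < supportFn K u := by
  obtain ⟨ε, R, hε, hR, h1, h2⟩ := hK.exists_data
  have h3 : 0 < ε * ‖u‖ := mul_pos hε (norm_pos_iff.2 hu)
  linarith [supportFn_pos_of_ball hε h1 hK.1 hu]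

lemma IsBody.supportFn_continuous (hK : IsBody K) : Continuous (supportFn K) := by
  obtain ⟨ε, R, hε, hR, h1, h2⟩ := hK.exists_data
  exact _root_.supportFn_continuous hR.le h2 hK.1 hK.nonempty

lemma IsBody.avg (hK : IsBody K) (hL : IsBody L) : IsBody ((2⁻¹ : ℝ) • (K + L)) := by
  refine ⟨(hK.1.add hL.1).smul _, ((hK.2.1.add hL.2.1).smul _), ?_⟩
  obtain ⟨ε, R, hε, hR, h1, _⟩ := hK.exists_data
  obtain ⟨ε', R', hε', hR', h1', _⟩ := hL.exists_data
  set δ := min ε ε' with hδ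
  have hδ0 : 0 < δ := lt_min hε hε'
  have hsub : ball (0 : E n) δ ⊆ (2⁻¹ : ℝ) • (K + L) := by
    intro x hx
    have hxK : x ∈ K := h1 (mem_closedBall_zero_iff.2
      (le_of_lt (lt_of_lt_of_le (mem_ball_zero_iff.1 hx) (min_le_left _ _))))
    have hxL : x ∈ L := h1' (mem_closedBall_zero_iff.2
      (le_of_lt (lt_of_lt_of_le (mem_ball_zero_iff.1 hx) (min_le_right _ _))))
    have : x + x ∈ K + L := Set.add_mem_add hxK hxL
    have h2 : (2⁻¹ : ℝ) • (x + x) = x := by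
      rw [smul_add]; module
    exact h2 ▸ Set.smul_mem_smul_set this
  exact interior_maximal hsub isOpen_ball (mem_ball_self hδ0)

lemma IsBody.supportFn_avg (hK : IsBody K) (hL : IsBody L) (u : E n) :
    supportFn ((2⁻¹ : ℝ) • (K + L)) u = (supportFn K u + supportFn L u) / 2 := by
  rw [supportFn_smul_left (by norm_num : (0:ℝ) ≤ 2⁻¹),
    supportFn_add hK.1 hK.nonempty hL.1 hL.nonempty]
  ring

end bodydata

section volformula
variable {n : ℕ} {K : Set (E n)}

lemma finrank_E (n : ℕ) : Module.finrank ℝ (E n) = n := by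
  simp [finrank_euclideanSpace]

lemma volumeIoiPow_le (m : ℕ) {c : ℝ} (hc : 0 < c) :
    MeasureTheory.Measure.volumeIoiPow m {r : Set.Ioi (0:ℝ) | r.1 ≤ c} =
      ENNReal.ofReal (c ^ (m + 1) / (m + 1)) := by
  have hset : {r : Set.Ioi (0:ℝ) | r.1 ≤ c} =
      Set.Iio (⟨c, hc⟩ : Set.Ioi (0:ℝ)) ∪ {(⟨c, hc⟩ : Set.Ioi (0:ℝ))} := by
    ext r
    simp only [Set.mem_setOf_eq, Set.mem_union, Set.mem_Iio, Set.mem_singleton_iff]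
    constructor
    · intro h
      rcases lt_or_eq_of_le h with h | h
      · exact Or.inl h
      · exact Or.inr (Subtype.ext h)
    · rintro (h | rfl)
      · exact le_of_lt h
      · exact le_refl _
  have hnull : MeasureTheory.Measure.volumeIoiPow m {(⟨c, hc⟩ : Set.Ioi (0:ℝ))} = 0 := by
    rw [MeasureTheory.Measure.volumeIoiPow,
      MeasureTheory.withDensity_apply _ (measurableSet_singleton _)]
    have : (volume.comap (Subtype.val : Set.Ioi (0:ℝ) → ℝ)) {(⟨c, hc⟩ : Set.Ioi (0:ℝ))} = 0 := by
      rw [comap_subtype_coe_apply measurableSet_Ioi]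
      simp
    rw [MeasureTheory.Measure.restrict_eq_zero.2 this]
    simp
  rw [hset]
  have := MeasureTheory.Measure.volumeIoiPow_apply_Iio m (⟨c, hc⟩ : Set.Ioi (0:ℝ))
  refine le_antisymm ?_ ?_
  · calc MeasureTheory.Measure.volumeIoiPow m (Set.Iio ⟨c, hc⟩ ∪ {⟨c, hc⟩})
        ≤ MeasureTheory.Measure.volumeIoiPow m (Set.Iio ⟨c, hc⟩) +
          MeasureTheory.Measure.volumeIoiPow m {⟨c, hc⟩} := measure_union_le _ _
      _ = ENNReal.ofReal (c ^ (m + 1) / (m + 1)) := by rw [hnull, add_zero, this]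
  · rw [← this]
    exact measure_mono Set.subset_union_left

lemma volume_polarBody (hn : 0 < n) (hK : IsBody K) :
    volume (polarBody K) =
      ∫⁻ u : Sph n, ENNReal.ofReal ((supportFn K u.1)⁻¹ ^ n / n)
        ∂((volume : Measure (E n)).toSphere) := by
  haveI : Nontrivial (E n) := Module.nontrivial_of_finrank_pos (by rw [finrank_E]; exact hn)
  have hcont := hK.supportFn_continuous
  have hPeq : polarBody K = {y | supportFn K y ≤ 1} := polarBody_eq hK.1 hK.nonempty
  have hPclosed : IsClosed (polarBody K) := by
    rw [hPeq]; exact isClosed_le hcont continuous_const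
  -- the set in the product space
  set A : Set (Sph n × Set.Ioi (0:ℝ)) :=
    {p | p.2.1 ≤ (supportFn K p.1.1)⁻¹} with hA
  have hApos : ∀ u : Sph n, (0:ℝ) < supportFn K u.1 := by
    intro u
    exact hK.supportFn_pos (by
      intro h0
      have := mem_sphere_zero_iff_norm.1 u.2
      rw [h0] at this; simp at this)
  have hAcont : Continuous fun p : Sph n × Set.Ioi (0:ℝ) => (supportFn K p.1.1)⁻¹ :=
    ((hcont.comp continuous_subtype_val).comp continuous_fst).inv₀
      (fun p => (hApos p.1).ne')
  have hAmeas : MeasurableSet A :=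
    (isClosed_le (continuous_subtype_val.comp continuous_snd) hAcont).measurableSet
  -- preimage identity
  have hpre : (homeomorphUnitSphereProd (E n)) ⁻¹' A =
      (Subtype.val : ({0}ᶜ : Set (E n)) → E n) ⁻¹' (polarBody K) := by
    ext x
    have hx0 : (x : E n) ≠ 0 := x.2
    have hxn : (0:ℝ) < ‖(x : E n)‖ := norm_pos_iff.2 hx0
    have hhx : 0 < supportFn K x.1 := hK.supportFn_pos hx0
    simp only [Set.mem_preimage, hA, Set.mem_setOf_eq, homeomorphUnitSphereProd_apply_snd_coe,
      homeomorphUnitSphereProd_apply_fst_coe, hPeq]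
    rw [supportFn_smul_right hK.1 hK.nonempty (by positivity : (0:ℝ) ≤ ‖(x:E n)‖⁻¹)]
    rw [mul_inv, inv_inv]
    have hinv : (supportFn K x.1)⁻¹ * supportFn K x.1 = 1 := inv_mul_cancel₀ hhx.ne'
    have hinvnn : (0:ℝ) ≤ (supportFn K x.1)⁻¹ := inv_nonneg.2 hhx.le
    constructor
    · intro h
      have h1 : 1 ≤ (supportFn K x.1)⁻¹ := (le_mul_iff_one_le_right hxn).1 h
      nlinarith
    · intro h
      refine (le_mul_iff_one_le_right hxn).2 ?_
      nlinarith
  -- main computation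
  have mp := (volume : Measure (E n)).measurePreserving_homeomorphUnitSphereProd
  calc volume (polarBody K)
      = volume (polarBody K \ {0}) := (measure_diff_null (measure_singleton 0)).symm
    _ = ((volume : Measure (E n)).comap Subtype.val)
          ((Subtype.val : ({0}ᶜ : Set (E n)) → E n) ⁻¹' polarBody K) := by
        rw [comap_subtype_coe_apply
            (measurableSet_singleton (0 : E n)).compl,
          Set.image_preimage_eq_inter_range, Subtype.range_coe, Set.diff_eq]
    _ = ((volume : Measure (E n)).toSphere.prod
          (MeasureTheory.Measure.volumeIoiPow (Module.finrank ℝ (E n) - 1))) A := by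
        rw [← hpre]; exact mp.measure_preimage hAmeas.nullMeasurableSet
    _ = ∫⁻ u : Sph n, MeasureTheory.Measure.volumeIoiPow (Module.finrank ℝ (E n) - 1)
          (Prod.mk u ⁻¹' A) ∂((volume : Measure (E n)).toSphere) :=
        MeasureTheory.Measure.prod_apply hAmeas
    _ = ∫⁻ u : Sph n, ENNReal.ofReal ((supportFn K u.1)⁻¹ ^ n / n)
          ∂((volume : Measure (E n)).toSphere) := by
        refine lintegral_congr fun u => ?_
        have hpre2 : Prod.mk u ⁻¹' A = {r : Set.Ioi (0:ℝ) | r.1 ≤ (supportFn K u.1)⁻¹} := rfl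
        rw [hpre2, finrank_E, volumeIoiPow_le _ (inv_pos.2 (hApos u)),
          Nat.sub_add_cancel hn]
        congr 1
        rw [Nat.cast_sub hn]
        norm_num

end volformula

section keyineq
variable {n : ℕ}

lemma zpow_neg_eq (n : ℕ) {x : ℝ} (hx : 0 < x) : x ^ (-(n:ℤ)) = x⁻¹ ^ n := by
  rw [zpow_neg, inv_pow, zpow_natCast]

lemma midpoint_ineq (hn : 0 < n) {a b : ℝ} (ha : 0 < a) (hb : 0 < b) :
    ((a + b) / 2)⁻¹ ^ n ≤ (a⁻¹ ^ n + b⁻¹ ^ n) / 2 := by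
  have h := (convexOn_zpow (𝕜 := ℝ) (-(n:ℤ))).2 (Set.mem_Ioi.2 ha) (Set.mem_Ioi.2 hb)
    (by norm_num : (0:ℝ) ≤ 1/2) (by norm_num : (0:ℝ) ≤ 1/2) (by norm_num)
  simp only [smul_eq_mul] at h
  rw [zpow_neg_eq n ha, zpow_neg_eq n hb, zpow_neg_eq n (by positivity : (0:ℝ) < 1/2*a + 1/2*b)] at h
  calc ((a + b) / 2)⁻¹ ^ n = (1/2*a + 1/2*b)⁻¹ ^ n := by ring_nf
    _ ≤ 1/2 * (a⁻¹^n) + 1/2 * (b⁻¹^n) := h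
    _ = (a⁻¹ ^ n + b⁻¹ ^ n) / 2 := by ring

lemma midpoint_eq (hn : 0 < n) {a b : ℝ} (ha : 0 < a) (hb : 0 < b)
    (heq : ((a + b) / 2)⁻¹ ^ n = (a⁻¹ ^ n + b⁻¹ ^ n) / 2) : a = b := by
  by_contra hab
  have h := (strictConvexOn_zpow (by simpa using hn.ne' : -(n:ℤ) ≠ 0)
    (by omega : -(n:ℤ) ≠ 1)).2 (Set.mem_Ioi.2 ha) (Set.mem_Ioi.2 hb) hab
    (by norm_num : (0:ℝ) < 1/2) (by norm_num : (0:ℝ) < 1/2) (by norm_num)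
  simp only [smul_eq_mul] at h
  rw [zpow_neg_eq n ha, zpow_neg_eq n hb, zpow_neg_eq n (by positivity : (0:ℝ) < 1/2*a + 1/2*b)] at h
  have : ((a + b) / 2)⁻¹ ^ n = (1/2*a + 1/2*b)⁻¹ ^ n := by ring_nf
  rw [← this, heq] at h
  linarith

end keyineq

section spherepos
variable {n : ℕ}

lemma toSphere_pos (hn : 0 < n) {s : Set (Sph n)} (hs : IsOpen s) (hne : s.Nonempty) :
    0 < (volume : Measure (E n)).toSphere s := by
  haveI : Nontrivial (E n) := Module.nontrivial_of_finrank_pos (by rw [finrank_E]; exact hn)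
  rw [MeasureTheory.Measure.toSphere_apply' _ hs.measurableSet]
  have h1 : (0:ℝ) < 1 := one_pos
  set r : Set.Ioi (0:ℝ) := ⟨1, h1⟩ with hr
  have haux := MeasureTheory.Measure.toSphere_apply_aux (volume : Measure (E n)) s r
  set U : Set (E n) := Subtype.val ''
    ((homeomorphUnitSphereProd (E n)) ⁻¹' (s ×ˢ Set.Iio r)) with hU
  have hUvol : volume U = volume (Set.Ioo (0:ℝ) 1 • (Subtype.val '' s)) := haux
  have hUopen : IsOpen U := by
    apply (isOpen_compl_singleton (x := (0 : E n))).isOpenMap_subtype_val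
    apply (homeomorphUnitSphereProd (E n)).continuous.isOpen_preimage
    apply hs.prod
    have : Set.Iio r = (Subtype.val : Set.Ioi (0:ℝ) → ℝ) ⁻¹' (Set.Iio 1) := by
      ext x; exact Iff.rfl
    rw [this]
    exact isOpen_Iio.preimage continuous_subtype_val
  have hUne : U.Nonempty := by
    obtain ⟨u, hu⟩ := hne
    set p : Sph n × Set.Ioi (0:ℝ) := (u, ⟨1/2, by norm_num⟩) with hp
    set x : ({0}ᶜ : Set (E n)) := (homeomorphUnitSphereProd (E n)).symm p with hx
    refine ⟨x.1, Set.mem_image_of_mem _ ?_⟩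
    show x ∈ (homeomorphUnitSphereProd (E n)) ⁻¹' (s ×ˢ Set.Iio r)
    rw [Set.mem_preimage, hx, Homeomorph.apply_symm_apply]
    refine ⟨hu, ?_⟩
    show ((1:ℝ)/2) < (1:ℝ)
    norm_num
  have hpos : 0 < volume U := hUopen.measure_pos volume hUne
  rw [hUvol] at hpos
  refine ENNReal.mul_pos ?_ hpos.ne'
  simp [finrank_E, hn.ne']

lemma continuous_eq_of_ae_eq (hn : 0 < n) {f g : Sph n → ℝ}
    (hf : Continuous f) (hg : Continuous g)
    (hae : f =ᵐ[(volume : Measure (E n)).toSphere] g) : ∀ u, f u = g u := by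
  by_contra hne
  push_neg at hne
  obtain ⟨u, hu⟩ := hne
  have hsopen : IsOpen {v : Sph n | f v ≠ g v} := isOpen_ne_fun hf hg
  have h0 : (volume : Measure (E n)).toSphere {v : Sph n | f v ≠ g v} = 0 := hae
  exact absurd h0 (toSphere_pos hn hsopen ⟨u, hu⟩).ne'

end spherepos

section determine
variable {n : ℕ} {K L : Set (E n)}

lemma sphere_coe_ne_zero (u : Sph n) : (u : E n) ≠ 0 := by
  intro h
  have := mem_sphere_zero_iff_norm.1 u.2
  rw [h] at this; simp at this

lemma supportFn_zero (hne : K.Nonempty) : supportFn K 0 = 0 := by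
  refine le_antisymm (supportFn_le hne fun x _ => by simp) ?_
  obtain ⟨x, hx⟩ := hne
  have : ((fun x => (inner ℝ x (0 : E n) : ℝ)) '' K).Nonempty := ⟨_, Set.mem_image_of_mem _ hx⟩
  calc (0:ℝ) = inner ℝ x (0 : E n) := by simp
    _ ≤ supportFn K 0 := le_csSup (by
        refine ⟨0, ?_⟩
        rintro r ⟨y, _, rfl⟩
        simp) (Set.mem_image_of_mem _ hx)

lemma subset_of_supportFn_le (hK : IsBody K) (hL : IsBody L)
    (h : ∀ u, supportFn K u ≤ supportFn L u) : K ⊆ L := by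
  intro x hx
  by_contra hxL
  obtain ⟨f, c, hfx, hfL⟩ := geometric_hahn_banach_point_closed hL.2.1 hL.1.isClosed hxL
  set w : E n := -(InnerProductSpace.toDual ℝ (E n)).symm f with hw
  have hinner : ∀ y : E n, (inner ℝ y w : ℝ) = -f y := by
    intro y
    rw [hw, inner_neg_right, real_inner_comm]
    rw [InnerProductSpace.toDual_symm_apply]
  have h1 : supportFn L w ≤ -c := by
    apply supportFn_le hL.nonempty
    intro y hy
    rw [hinner]
    linarith [hfL y hy]
  have h2 : -c < supportFn K w := by
    calc -c < -f x := by linarith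
      _ = (inner ℝ x w : ℝ) := (hinner x).symm
      _ ≤ supportFn K w := le_supportFn hK.1 hx w
  linarith [h w]

lemma eq_of_supportFn_sphere_eq (hK : IsBody K) (hL : IsBody L)
    (h : ∀ u : Sph n, supportFn K u.1 = supportFn L u.1) : K = L := by
  have hall : ∀ u : E n, supportFn K u = supportFn L u := by
    intro u
    rcases eq_or_ne u 0 with rfl | hu
    · rw [supportFn_zero hK.nonempty, supportFn_zero hL.nonempty]
    · have hnu : (0:ℝ) < ‖u‖ := norm_pos_iff.2 hu
      have husph : ‖u‖⁻¹ • u ∈ Metric.sphere (0 : E n) 1 := by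
        simp [norm_smul, abs_of_pos (inv_pos.2 hnu), inv_mul_cancel₀ hnu.ne']
      have hdecomp : u = ‖u‖ • (‖u‖⁻¹ • u) := by
        rw [smul_smul, mul_inv_cancel₀ hnu.ne', one_smul]
      rw [hdecomp, supportFn_smul_right hK.1 hK.nonempty hnu.le,
        supportFn_smul_right hL.1 hL.nonempty hnu.le, h ⟨_, husph⟩]
  exact le_antisymm
    (subset_of_supportFn_le hK hL fun u => (hall u).le)
    (subset_of_supportFn_le hL hK fun u => (hall u).ge)

lemma IsBody.polar_volume_ne_top (hK : IsBody K) : volume (polarBody K) ≠ ⊤ := by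
  obtain ⟨ε, R, hε, hR, h1, h2⟩ := hK.exists_data
  have hsub : polarBody K ⊆ closedBall 0 ε⁻¹ := by
    intro y hy
    rcases eq_or_ne y 0 with rfl | hy0
    · simp [inv_nonneg.2 hε.le]
    · have hhy : supportFn K y ≤ 1 := by
        rw [polarBody_eq hK.1 hK.nonempty] at hy
        exact hy
      have hεy : ε * ‖y‖ ≤ 1 := (supportFn_pos_of_ball hε h1 hK.1 hy0).trans hhy
      rw [mem_closedBall_zero_iff, ← one_div, le_div_iff₀ hε]
      linarith
  exact ((measure_mono hsub).trans_lt measure_closedBall_lt_top).ne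

end determine

theorem vrad_average_eq_one_imp_eq {n : ℕ} (hn : 0 < n)
    (K L : Set (E n)) (hK : IsBody K) (hL : IsBody L)
    (hKvol : volume (polarBody K) = unitBallVol n)
    (hLvol : volume (polarBody L) = unitBallVol n)
    (hvrad : ((volume (polarBody ((2⁻¹ : ℝ) • (K + L)))).toReal /
        (unitBallVol n).toReal) ^ ((1 : ℝ) / n) = 1) :
    K = L := by
  classical
  set M := (2⁻¹ : ℝ) • (K + L) with hMdef
  have hM : IsBody M := hK.avg hL
  set μS := (volume : Measure (E n)).toSphere with hμS
  -- unit ball volume facts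
  have hω_ne : unitBallVol n ≠ 0 := (measure_closedBall_pos volume 0 one_pos).ne'
  have hω_top : unitBallVol n ≠ ⊤ := measure_closedBall_lt_top.ne
  -- derive volume (polarBody M) = unitBallVol n
  have hMvol : volume (polarBody M) = unitBallVol n := by
    have hfinM := hM.polar_volume_ne_top
    have hωR : 0 < (unitBallVol n).toReal := ENNReal.toReal_pos hω_ne hω_top
    set x : ℝ := (volume (polarBody M)).toReal / (unitBallVol n).toReal with hxdef
    have hx0 : 0 ≤ x := div_nonneg ENNReal.toReal_nonneg ENNReal.toReal_nonneg
    have hx1 : x = 1 := by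
      have hne : ((n:ℝ)) ≠ 0 := by exact_mod_cast hn.ne'
      calc x = x ^ ((1:ℝ)) := (Real.rpow_one x).symm
        _ = x ^ (((1:ℝ)/n) * n) := by rw [one_div_mul_cancel hne]
        _ = (x ^ ((1:ℝ)/n)) ^ ((n:ℝ)) := Real.rpow_mul hx0 _ _
        _ = (1:ℝ) ^ ((n:ℝ)) := by rw [hvrad]
        _ = 1 := Real.one_rpow _
    have := (div_eq_one_iff_eq hωR.ne').1 hx1
    exact (ENNReal.toReal_eq_toReal_iff' hfinM hω_top).1 this
  -- support functions on the sphere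
  set a : Sph n → ℝ := fun u => supportFn K u.1 with ha_def
  set b : Sph n → ℝ := fun u => supportFn L u.1 with hb_def
  have ha_pos : ∀ u, 0 < a u := fun u => hK.supportFn_pos (sphere_coe_ne_zero u)
  have hb_pos : ∀ u, 0 < b u := fun u => hL.supportFn_pos (sphere_coe_ne_zero u)
  have ha_cont : Continuous a := hK.supportFn_continuous.comp continuous_subtype_val
  have hb_cont : Continuous b := hL.supportFn_continuous.comp continuous_subtype_val
  set F : Sph n → ℝ≥0∞ := fun u => ENNReal.ofReal ((a u)⁻¹ ^ n / n) with hF_def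
  set G : Sph n → ℝ≥0∞ := fun u => ENNReal.ofReal ((b u)⁻¹ ^ n / n) with hG_def
  set H : Sph n → ℝ≥0∞ := fun u => ENNReal.ofReal (((a u + b u) / 2)⁻¹ ^ n / n) with hH_def
  have hF_meas : Measurable F :=
    (ENNReal.continuous_ofReal.comp
      (((ha_cont.inv₀ fun u => (ha_pos u).ne').pow n).div_const _)).measurable
  have hG_meas : Measurable G :=
    (ENNReal.continuous_ofReal.comp
      (((hb_cont.inv₀ fun u => (hb_pos u).ne').pow n).div_const _)).measurable
  have hH_meas : Measurable H :=
    (ENNReal.continuous_ofReal.comp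
      ((((ha_cont.add hb_cont).div_const 2).inv₀
        (fun u => by have := ha_pos u; have := hb_pos u; show (a u + b u) / 2 ≠ 0; exact ne_of_gt (by linarith))).pow n |>.div_const
          _)).measurable
  -- integral identities
  have vF : ∫⁻ u, F u ∂μS = unitBallVol n := (volume_polarBody hn hK).symm.trans hKvol
  have vG : ∫⁻ u, G u ∂μS = unitBallVol n := (volume_polarBody hn hL).symm.trans hLvol
  have vH : ∫⁻ u, H u ∂μS = unitBallVol n := by
    rw [← hMvol, volume_polarBody hn hM]
    refine lintegral_congr fun u => ?_
    rw [hK.supportFn_avg hL]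
  have hFnn : ∀ u : Sph n, (0:ℝ) ≤ (a u)⁻¹ ^ n / n :=
    fun u => div_nonneg (pow_nonneg (inv_nonneg.2 (ha_pos u).le) _) (Nat.cast_nonneg _)
  have hGnn : ∀ u : Sph n, (0:ℝ) ≤ (b u)⁻¹ ^ n / n :=
    fun u => div_nonneg (pow_nonneg (inv_nonneg.2 (hb_pos u).le) _) (Nat.cast_nonneg _)
  have hHnn : ∀ u : Sph n, (0:ℝ) ≤ ((a u + b u) / 2)⁻¹ ^ n / n := by
    intro u
    have h1 : (0:ℝ) < (a u + b u) / 2 := by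
      have := ha_pos u; have := hb_pos u; linarith
    exact div_nonneg (pow_nonneg (inv_nonneg.2 h1.le) _) (Nat.cast_nonneg _)
  -- pointwise inequality
  have key : ∀ u, 2 * H u ≤ F u + G u := by
    intro u
    have hmid := midpoint_ineq hn (ha_pos u) (hb_pos u)
    have hnR : (0:ℝ) < n := by exact_mod_cast hn
    have habpos : (0:ℝ) < (a u + b u) / 2 := by have := ha_pos u; have := hb_pos u; positivity
    calc 2 * H u = ENNReal.ofReal (2 * (((a u + b u) / 2)⁻¹ ^ n / n)) := by
          rw [ENNReal.ofReal_mul (by norm_num : (0:ℝ) ≤ 2)]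
          congr 1
          simp
      _ ≤ ENNReal.ofReal ((a u)⁻¹ ^ n / n + (b u)⁻¹ ^ n / n) := by
          apply ENNReal.ofReal_le_ofReal
          rw [← add_div]
          calc 2 * (((a u + b u) / 2)⁻¹ ^ n / n) = 2 * ((a u + b u) / 2)⁻¹ ^ n / n := by ring
            _ ≤ ((a u)⁻¹ ^ n + (b u)⁻¹ ^ n) / n := by gcongr; linarith
      _ = F u + G u := by
          rw [ENNReal.ofReal_add (hFnn u) (hGnn u)]
  -- equality case
  have h2H : ∫⁻ u, 2 * H u ∂μS = 2 * unitBallVol n := by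
    rw [lintegral_const_mul 2 hH_meas, vH]
  have hFG : ∫⁻ u, (F u + G u) ∂μS = 2 * unitBallVol n := by
    rw [lintegral_add_left hF_meas, vF, vG, two_mul]
  have h2H_ne_top : ∫⁻ u, 2 * H u ∂μS ≠ ⊤ := by
    rw [h2H]
    exact ENNReal.mul_ne_top (by norm_num) hω_top
  have hzero : ∫⁻ u, (F u + G u - 2 * H u) ∂μS = 0 := by
    rw [lintegral_sub (hH_meas.const_mul 2) h2H_ne_top (Filter.Eventually.of_forall key),
      hFG, h2H, tsub_self]
  have hae0 : ∀ᵐ u ∂μS, F u + G u - 2 * H u = 0 :=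
    (lintegral_eq_zero_iff ((hF_meas.add hG_meas).sub (hH_meas.const_mul 2))).1 hzero
  have haeab : ∀ᵐ u ∂μS, a u = b u := by
    filter_upwards [hae0] with u hu
    have hle : F u + G u ≤ 2 * H u := tsub_eq_zero_iff_le.1 hu
    have heq : F u + G u = 2 * H u := le_antisymm hle (key u)
    have hnR : (0:ℝ) < n := by exact_mod_cast hn
    have habpos : (0:ℝ) < (a u + b u) / 2 := by have := ha_pos u; have := hb_pos u; positivity
    have heqR : (a u)⁻¹ ^ n / n + (b u)⁻¹ ^ n / n = 2 * (((a u + b u) / 2)⁻¹ ^ n / n) := by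
      have h1 : F u + G u = ENNReal.ofReal ((a u)⁻¹ ^ n / n + (b u)⁻¹ ^ n / n) := by
        rw [ENNReal.ofReal_add (hFnn u) (hGnn u)]
      have h2 : 2 * H u = ENNReal.ofReal (2 * (((a u + b u) / 2)⁻¹ ^ n / n)) := by
        rw [ENNReal.ofReal_mul (by norm_num : (0:ℝ) ≤ 2)]
        congr 1
        simp
      rw [h1, h2] at heq
      exact (ENNReal.ofReal_eq_ofReal_iff (add_nonneg (hFnn u) (hGnn u))
        (mul_nonneg (by norm_num) (hHnn u))).1 heq
    apply midpoint_eq hn (ha_pos u) (hb_pos u)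
    have h3 : ((a u)⁻¹ ^ n + (b u)⁻¹ ^ n) / n = (2 * ((a u + b u) / 2)⁻¹ ^ n) / n := by
      calc ((a u)⁻¹ ^ n + (b u)⁻¹ ^ n) / n
          = (a u)⁻¹ ^ n / n + (b u)⁻¹ ^ n / n := add_div _ _ _
        _ = 2 * (((a u + b u) / 2)⁻¹ ^ n / n) := heqR
        _ = (2 * ((a u + b u) / 2)⁻¹ ^ n) / n := by ring
    have h4 : (a u)⁻¹ ^ n + (b u)⁻¹ ^ n = 2 * ((a u + b u) / 2)⁻¹ ^ n := by
      have := (div_eq_div_iff hnR.ne' hnR.ne').1 h3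
      exact mul_right_cancel₀ hnR.ne' this
    linarith
  exact eq_of_supportFn_sphere_eq hK hL (continuous_eq_of_ae_eq hn ha_cont hb_cont haeab)
end
end

section
/- Let (K_i) be a uniformly bounded sequence of convex bodies in ℝ^n with the origin in their interiors such that |K_i°| = ω_n for all i. Then there exists a subsequence (K_{i_j}) and a convex body K with the origin in its interior such that K_{i_j} → K in the Hausdorff metric and |K°| = ω_n. -/
open MeasureTheory Metric Filter Set ENNReal

noncomputable section

open Pointwise

variable {n : ℕ} {K L : Set (E n)}

lemma polar_anti (h : K ⊆ L) : polarBody L ⊆ polarBody K :=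
  fun _ hy x hx => hy x (h hx)

lemma polar_convex : Convex ℝ (polarBody K) := by
  have : polarBody K = ⋂ x ∈ K, {y : E n | (inner ℝ x y : ℝ) ≤ 1} := by
    ext y; simp [polarBody]
  rw [this]
  exact convex_iInter fun x => convex_iInter fun _ =>
    convex_halfSpace_le ⟨fun a b => inner_add_right x a b, fun c a => real_inner_smul_right x a c⟩ 1

lemma polar_closed : IsClosed (polarBody K) := by
  have : polarBody K = ⋂ x ∈ K, {y : E n | (inner ℝ x y : ℝ) ≤ 1} := by
    ext y; simp [polarBody]
  rw [this]
  exact isClosed_iInter fun x => isClosed_iInter fun _ =>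
    isClosed_le (Continuous.inner continuous_const continuous_id) continuous_const

lemma polar_subset_closedBall {r : ℝ} (hr : 0 < r) (h : closedBall 0 r ⊆ K) :
    polarBody K ⊆ closedBall 0 r⁻¹ := by
  intro y hy
  rcases eq_or_ne y 0 with rfl | hy0
  · simp [inv_nonneg.mpr hr.le]
  · have hny : 0 < ‖y‖ := norm_pos_iff.mpr hy0
    have hx : (r / ‖y‖) • y ∈ K := by
      apply h
      rw [mem_closedBall, dist_zero_right, norm_smul, Real.norm_eq_abs, abs_of_nonneg (div_nonneg hr.le hny.le),
        div_mul_cancel₀ _ hny.ne']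
    have := hy _ hx
    rw [real_inner_smul_left, real_inner_self_eq_norm_sq] at this
    have : r * ‖y‖ ≤ 1 := by
      have : r / ‖y‖ * ‖y‖ ^ 2 = r * ‖y‖ := by field_simp
      linarith [this ▸ ‹r / ‖y‖ * ‖y‖ ^ 2 ≤ 1›]
    rw [mem_closedBall, dist_zero_right, ← one_div, le_div_iff₀ hr]
    linarith

lemma closedBall_subset_polar {R : ℝ} (hR : 0 < R) (h : K ⊆ closedBall 0 R) :
    closedBall 0 R⁻¹ ⊆ polarBody K := by
  intro y hy x hx
  calc (inner ℝ x y : ℝ) ≤ ‖x‖ * ‖y‖ := real_inner_le_norm x y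
    _ ≤ R * R⁻¹ := by
        apply mul_le_mul (by simpa [dist_zero_right] using h hx)
          (by simpa [dist_zero_right] using hy) (norm_nonneg _) hR.le
    _ = 1 := mul_inv_cancel₀ hR.ne'

lemma polar_smul {c : ℝ} (hc : 0 < c) : polarBody (c • K) = c⁻¹ • polarBody K := by
  ext y
  constructor
  · intro hy
    refine ⟨c • y, fun x hx => ?_, by simp [smul_smul, inv_mul_cancel₀ hc.ne']⟩
    have := hy (c • x) ⟨x, hx, rfl⟩
    rwa [real_inner_smul_left, ← real_inner_smul_right] at this
  · rintro ⟨z, hz, rfl⟩ x ⟨w, hw, rfl⟩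
    rw [real_inner_smul_right, real_inner_smul_left, ← mul_assoc, inv_mul_cancel₀ hc.ne', one_mul]
    exact hz w hw


lemma unitBallVol_ne_top : unitBallVol n ≠ ⊤ :=
  (isCompact_closedBall _ _).measure_lt_top.ne

lemma norm_le_of_mem_polar {R : ℝ} (hR : 1 ≤ R) (hKR : K ⊆ closedBall 0 R)
    (hvol : volume (polarBody K) ≤ unitBallVol n) {y : E n} (hy : y ∈ polarBody K) :
    ‖y‖ ≤ max 1 (2 * (unitBallVol n).toReal * (2 * R * Real.sqrt n) ^ n) := by
  by_contra hcon
  push_neg at hcon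
  have hy1 : 1 < ‖y‖ := lt_of_le_of_lt (le_max_left _ _) hcon
  have hypos : 0 < ‖y‖ := by linarith
  have hn : 0 < n := by
    rcases Nat.eq_zero_or_pos n with rfl | h
    · have : y = 0 := Subsingleton.elim y 0
      simp [this] at hypos
    · exact h
  have hRpos : 0 < R := by linarith
  have hsqn : 1 ≤ Real.sqrt n := by
    rw [show (1:ℝ) = Real.sqrt 1 by simp]
    exact Real.sqrt_le_sqrt (by exact_mod_cast hn)
  have hsqpos : 0 < Real.sqrt n := by linarith
  set s : ℝ := (2 * R * Real.sqrt n)⁻¹ with hs_def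
  have hbase : 1 ≤ 2 * R * Real.sqrt n := by nlinarith
  have hs : 0 < s := inv_pos.mpr (by linarith)
  have hs1 : s ≤ 1 := inv_le_one_of_one_le₀ hbase
  set L : ℝ := ‖y‖ / 2 with hL_def
  have hL : 0 < L := by positivity
  set u : E n := ‖y‖⁻¹ • y with hu_def
  have hu_norm : ‖u‖ = 1 := by
    rw [hu_def, norm_smul, Real.norm_eq_abs, abs_of_nonneg (inv_nonneg.mpr hypos.le),
      inv_mul_cancel₀ hypos.ne']
  set i0 : Fin n := ⟨0, hn⟩ with hi0_def
  -- orthonormal basis with b i0 = u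
  have hON : Orthonormal ℝ (({i0} : Set (Fin n)).restrict (fun _ : Fin n => u)) := by
    constructor
    · intro i; exact hu_norm
    · intro i j hij
      exact absurd (Subsingleton.elim i j) hij
  obtain ⟨b, hb⟩ := hON.exists_orthonormalBasis_extension_of_card_eq
    (by simp [finrank_euclideanSpace])
  have hb0 : b i0 = u := hb i0 rfl
  -- the cube
  set f : Fin n → ℝ := fun j => if j = i0 then L else s with hf_def
  have hf_nonneg : ∀ j, 0 ≤ f j := by
    intro j; by_cases h : j = i0 <;> simp [hf_def, h, hL.le, hs.le]
  set cube : Set (E n) := {x | ∀ j, b.repr x j ∈ Icc 0 (f j)} with hcube_def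
  -- cube ⊆ polarBody K
  have hsub : cube ⊆ polarBody K := by
    intro x hx
    set c0 : ℝ := b.repr x i0 with hc0_def
    have hc0 : c0 ∈ Icc 0 L := by simpa [hf_def] using hx i0
    set t : ℝ := c0 / ‖y‖ with ht_def
    have ht0 : 0 ≤ t := div_nonneg hc0.1 hypos.le
    have ht2 : t ≤ 1 / 2 := by
      rw [ht_def, div_le_div_iff₀ hypos (by norm_num)]
      calc c0 * 2 ≤ L * 2 := by linarith [hc0.2]
        _ = ‖y‖ := by rw [hL_def]; ring
        _ ≤ 1 * ‖y‖ := by linarith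
    set w : E n := x - c0 • u with hw_def
    have hw_repr : ∀ j, b.repr w j = if j = i0 then 0 else b.repr x j := by
      intro j
      have hrepr : b.repr u = EuclideanSpace.single i0 (1:ℝ) := by
        rw [← hb0, b.repr_self]
      have hsplit : b.repr w = b.repr x - c0 • b.repr u := by
        rw [hw_def, map_sub, _root_.map_smul]
      rw [hsplit, hrepr]
      by_cases h : j = i0
      · subst h; simp [PiLp.sub_apply, PiLp.smul_apply, EuclideanSpace.single_apply, hc0_def]
      · simp [PiLp.sub_apply, PiLp.smul_apply, EuclideanSpace.single_apply, h]
    have hw_norm : ‖w‖ ≤ Real.sqrt n * s := by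
      have h1 : ‖w‖ = ‖b.repr w‖ := (b.repr.norm_map w).symm
      rw [h1, EuclideanSpace.norm_eq]
      have h2 : ∀ j, ‖b.repr w j‖ ^ 2 ≤ s ^ 2 := by
        intro j
        rw [hw_repr j]
        by_cases h : j = i0
        · simp [h]; positivity
        · simp only [h, if_false]
          have hj := hx j
          simp [hf_def, h] at hj
          rw [Real.norm_eq_abs, sq_abs]
          nlinarith [hj.1, hj.2]
      calc Real.sqrt (∑ j, ‖b.repr w j‖ ^ 2) ≤ Real.sqrt (∑ _j : Fin n, s ^ 2) :=
            Real.sqrt_le_sqrt (Finset.sum_le_sum fun j _ => h2 j)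
        _ = Real.sqrt (n * s ^ 2) := by rw [Finset.sum_const]; simp [mul_comm]
        _ = Real.sqrt n * s := by
            rw [Real.sqrt_mul (by positivity), Real.sqrt_sq hs.le]
    have ht1 : (0:ℝ) < 1 - t := by linarith
    set z : E n := (1 - t)⁻¹ • w with hz_def
    have hz_norm : ‖z‖ ≤ R⁻¹ := by
      rw [hz_def, norm_smul, Real.norm_eq_abs, abs_of_nonneg (inv_nonneg.mpr ht1.le)]
      have h3 : (1 - t)⁻¹ ≤ 2 := by
        rw [inv_le_comm₀ ht1 (by norm_num)]
        linarith
      calc (1-t)⁻¹ * ‖w‖ ≤ 2 * (Real.sqrt n * s) := by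
            apply mul_le_mul h3 hw_norm (norm_nonneg _) (by norm_num)
        _ = R⁻¹ := by
            rw [hs_def]
            field_simp
    have hz_mem : z ∈ polarBody K := by
      apply closedBall_subset_polar hRpos hKR
      simpa [dist_zero_right] using hz_norm
    have hx_comb : x = t • y + (1 - t) • z := by
      rw [hz_def, smul_smul, mul_inv_cancel₀ ht1.ne', one_smul, hw_def, ht_def, hu_def,
        div_eq_mul_inv, mul_smul]
      abel
    rw [hx_comb]
    exact polar_convex hy hz_mem ht0 ht1.le (by ring)
  -- volume of cube
  have hvol_cube : volume cube = ENNReal.ofReal L * ENNReal.ofReal s ^ (n - 1) := by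
    have e1 : cube = ⇑b.repr ⁻¹' (((MeasurableEquiv.toLp 2 (Fin n → ℝ)).symm) ⁻¹'
        (Set.pi univ fun j => Icc 0 (f j))) := by
      ext x
      simp only [mem_preimage, MeasurableEquiv.coe_toLp_symm, Set.mem_pi, mem_univ,
        true_implies, hcube_def, mem_setOf_eq]
    have hms : MeasurableSet (Set.pi univ fun j => Icc (0:ℝ) (f j)) :=
      MeasurableSet.univ_pi fun j => measurableSet_Icc
    rw [e1, b.measurePreserving_repr.measure_preimage
        ((((MeasurableEquiv.toLp 2 (Fin n → ℝ)).symm).measurable hms)).nullMeasurableSet,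
      (EuclideanSpace.volume_preserving_symm_measurableEquiv_toLp
        (Fin n)).measure_preimage hms.nullMeasurableSet,
      volume_pi_pi]
    simp only [Real.volume_Icc]
    rw [Finset.prod_eq_mul_prod_sdiff_singleton_of_mem (Finset.mem_univ i0)]
    simp only [hf_def, if_pos rfl, sub_zero]
    congr 1
    rw [Finset.prod_congr rfl (fun j hj => ?_), Finset.prod_const]
    · congr 1
      rw [Finset.card_sdiff_of_subset (by simp), Finset.card_univ]
      simp
    · have : j ≠ i0 := by simpa using (Finset.mem_sdiff.mp hj).2
      simp [this]
  -- combine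
  have hle : ENNReal.ofReal (L * s ^ (n-1)) ≤ unitBallVol n := by
    rw [ENNReal.ofReal_mul hL.le, ENNReal.ofReal_pow hs.le, ← hvol_cube]
    exact le_trans (measure_mono hsub) hvol
  rw [ENNReal.ofReal_le_iff_le_toReal unitBallVol_ne_top] at hle
  set ωr := (unitBallVol n).toReal with hωr
  have hωr0 : 0 ≤ ωr := ENNReal.toReal_nonneg
  have hsn : s ^ n ≤ s ^ (n - 1) := pow_le_pow_of_le_one hs.le hs1 (Nat.sub_le n 1)
  have h4 : L * s ^ n ≤ ωr := le_trans (by nlinarith [pow_pos hs n, hL.le]) hle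
  have h5 : s ^ n = ((2 * R * Real.sqrt n) ^ n)⁻¹ := by rw [hs_def, inv_pow]
  have hbn : 0 < (2 * R * Real.sqrt n) ^ n := pow_pos (by linarith) n
  rw [h5] at h4
  have h7 : L / (2 * R * Real.sqrt n) ^ n ≤ ωr := by rw [div_eq_mul_inv]; exact h4
  have h8 : L ≤ ωr * (2 * R * Real.sqrt n) ^ n := (div_le_iff₀ hbn).mp h7
  have h6 : ‖y‖ ≤ 2 * ωr * (2 * R * Real.sqrt n) ^ n := by
    rw [hL_def] at h8; linarith
  have := lt_of_le_of_lt (le_max_right 1 (2 * ωr * (2 * R * Real.sqrt n) ^ n)) hcon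
  linarith


lemma closedBall_subset_of_polar_subset {r' : ℝ} (hr' : 0 < r') (hKconv : Convex ℝ K)
    (hKcl : IsClosed K) (h0 : (0:E n) ∈ K)
    (hpol : polarBody K ⊆ closedBall 0 r') :
    closedBall 0 (2*r')⁻¹ ⊆ K := by
  intro x hx
  by_contra hxK
  obtain ⟨f, c, hfa, hcx⟩ := geometric_hahn_banach_closed_point hKconv hKcl hxK
  have hc0 : 0 < c := by have := hfa 0 h0; rwa [map_zero] at this
  set yf := (InnerProductSpace.toDual ℝ (E n)).symm f with hyf_def
  have hyf : ∀ z : E n, (inner ℝ yf z : ℝ) = f z := fun z =>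
    InnerProductSpace.toDual_symm_apply
  set y' : E n := c⁻¹ • yf with hy'_def
  have hy' : y' ∈ polarBody K := by
    intro z hz
    rw [real_inner_comm, hy'_def, real_inner_smul_left, hyf]
    rw [inv_mul_le_iff₀ hc0, mul_one]
    exact (hfa z hz).le
  have h1 : ‖y'‖ ≤ r' := by simpa [dist_zero_right] using hpol hy'
  have h2 : 1 < (inner ℝ x y' : ℝ) := by
    rw [real_inner_comm, hy'_def, real_inner_smul_left, hyf]
    rw [lt_inv_mul_iff₀ hc0, mul_one]
    exact hcx
  have h3 : (inner ℝ x y' : ℝ) ≤ ‖x‖ * ‖y'‖ := real_inner_le_norm x y'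
  have h4 : ‖x‖ ≤ (2*r')⁻¹ := by simpa [dist_zero_right] using hx
  have h5 : ‖x‖ * ‖y'‖ ≤ (2*r')⁻¹ * r' := by
    apply mul_le_mul h4 h1 (norm_nonneg _) (by positivity)
  have h6 : (2*r')⁻¹ * r' = 1/2 := by field_simp
  linarith

lemma vol_polar_le {A B : Set (E n)} {r : ℝ} (hr : 0 < r)
    (hAconv : Convex ℝ A) (hAc : IsCompact A) (hAr : closedBall 0 r ⊆ A)
    (hBc : IsCompact B) (hBne : B.Nonempty) :
    volume (polarBody A) ≤
      ENNReal.ofReal ((1 + hausdorffDist B A / r) ^ n) * volume (polarBody B) := by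
  set δ := hausdorffDist B A with hδ_def
  have hδ : 0 ≤ δ := hausdorffDist_nonneg
  have hAne : A.Nonempty := ⟨0, hAr (by simp [hr.le])⟩
  have hne_top : EMetric.hausdorffEdist B A ≠ ⊤ :=
    hausdorffEdist_ne_top_of_nonempty_of_bounded hBne hAne hBc.isBounded hAc.isBounded
  set c : ℝ := 1 + δ / r with hc_def
  have hc : 0 < c := by positivity
  have hc1 : 1 ≤ c := by
    rw [hc_def]; nlinarith [div_nonneg hδ hr.le]
  have hsub : B ⊆ c • A := by
    intro x hxB
    obtain ⟨a, haA, hdist⟩ := hAc.exists_infDist_eq_dist hAne x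
    have h1 : dist x a ≤ δ := by
      rw [← hdist]; exact infDist_le_hausdorffDist_of_mem hxB hne_top
    have h2 : x - a ∈ (δ/r) • A := by
      rcases eq_or_lt_of_le hδ with heq | hpos
      · have hxa : x = a := by
          rw [← dist_le_zero]; rw [← heq] at h1; exact h1
        rw [hxa, sub_self, ← heq]
        simp only [zero_div]
        rw [zero_smul_set hAne]
        exact rfl
      · have hmem : x - a ∈ closedBall (0 : E n) δ := by
          simpa [dist_eq_norm] using h1
        have : closedBall (0 : E n) δ = (δ/r) • closedBall 0 r := by
          rw [smul_closedBall _ _ hr.le, smul_zero]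
          rw [Real.norm_eq_abs, abs_div, abs_of_pos hpos, abs_of_pos hr, div_mul_cancel₀ _ hr.ne']
        rw [this] at hmem
        exact smul_set_mono hAr hmem
    have hcomb : c • A = (1:ℝ) • A + (δ/r) • A := by
      rw [hc_def, hAconv.add_smul one_pos.le (div_nonneg hδ hr.le)]
    rw [hcomb]
    have hxeq : x = a + (x - a) := by abel
    rw [hxeq]
    exact Set.add_mem_add ⟨a, haA, one_smul ℝ a⟩ h2
  have hpol : c⁻¹ • polarBody A ⊆ polarBody B := by
    have h := polar_anti hsub
    rwa [polar_smul hc] at h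
  calc volume (polarBody A)
      = ENNReal.ofReal (c ^ n) * volume (c⁻¹ • polarBody A) := by
        have hcc : c ^ n * c⁻¹ ^ n = 1 := by
          rw [← mul_pow, mul_inv_cancel₀ hc.ne', one_pow]
        rw [Measure.addHaar_smul, finrank_euclideanSpace_fin,
          abs_of_nonneg (by positivity : (0:ℝ) ≤ c⁻¹ ^ n), ← mul_assoc,
          ← ENNReal.ofReal_mul (by positivity), hcc, ENNReal.ofReal_one, one_mul]
    _ ≤ ENNReal.ofReal (c ^ n) * volume (polarBody B) :=
        mul_le_mul_right (measure_mono hpol) _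


theorem blaschke_selection_polar_volume {n : ℕ}
    (K : ℕ → Set (E n)) (hK : ∀ i, IsBody (K i))
    (hbd : ∃ R : ℝ, ∀ i, K i ⊆ Metric.closedBall (0 : E n) R)
    (hvol : ∀ i, volume (polarBody (K i)) = unitBallVol n) :
    ∃ (φ : ℕ → ℕ) (Kl : Set (E n)), StrictMono φ ∧ IsBody Kl ∧
      Tendsto (fun j => hausdorffDist (K (φ j)) Kl) atTop (nhds 0) ∧
      volume (polarBody Kl) = unitBallVol n := by
  obtain ⟨R0, hR0⟩ := hbd
  set R : ℝ := max R0 1 with hR_def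
  have hR1 : 1 ≤ R := le_max_right _ _
  have hRpos : 0 < R := lt_of_lt_of_le one_pos hR1
  have hKR : ∀ i, K i ⊆ closedBall 0 R := fun i =>
    (hR0 i).trans (closedBall_subset_closedBall (le_max_left _ _))
  set r' : ℝ := max 1 (2 * (unitBallVol n).toReal * (2*R*Real.sqrt n)^n) with hr'_def
  have hr' : 0 < r' := lt_of_lt_of_le one_pos (le_max_left _ _)
  have hpolsub : ∀ i, polarBody (K i) ⊆ closedBall 0 r' := by
    intro i y hy
    rw [mem_closedBall, dist_zero_right]
    exact norm_le_of_mem_polar hR1 (hKR i) (hvol i).le hy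
  set r : ℝ := (2*r')⁻¹ with hr_def
  have hrpos : 0 < r := by positivity
  have h0K : ∀ i, (0:E n) ∈ K i := fun i => interior_subset (hK i).2.2
  have hball : ∀ i, closedBall 0 r ⊆ K i := fun i =>
    closedBall_subset_of_polar_subset hr' (hK i).2.1 (hK i).1.isClosed (h0K i) (hpolsub i)
  -- Blaschke selection
  set X : Set (E n) := closedBall (0:E n) R with hX_def
  haveI : CompactSpace X := isCompact_iff_compactSpace.mp (isCompact_closedBall _ _)
  have h0X : (0:E n) ∈ X := by simp [hX_def, hRpos.le]
  set F : ℕ → TopologicalSpace.NonemptyCompacts X := fun i =>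
    ⟨⟨Subtype.val ⁻¹' (K i), ((hK i).1.isClosed.preimage continuous_subtype_val).isCompact⟩,
     ⟨⟨0, h0X⟩, h0K i⟩⟩ with hF_def
  obtain ⟨C, -, φ, hφ, hC⟩ := isCompact_univ.tendsto_subseq (fun i => mem_univ (F i))
  set Kl : Set (E n) := Subtype.val '' (C : Set X) with hKl_def
  have hval : ∀ i, Subtype.val '' ((F i : Set X)) = K i := by
    intro i
    have hco : ((F i : Set X)) = Subtype.val ⁻¹' (K i) := rfl
    rw [hco, Subtype.image_preimage_coe]
    exact inter_eq_self_of_subset_right (hKR i)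
  have hdist : Tendsto (fun j => hausdorffDist (K (φ j)) Kl) atTop (nhds 0) := by
    have h1 := tendsto_iff_dist_tendsto_zero.mp hC
    have h2 : ∀ j, hausdorffDist (K (φ j)) Kl = dist (F (φ j)) C := by
      intro j
      rw [Metric.NonemptyCompacts.dist_eq, ← hval (φ j), hKl_def]
      exact hausdorffDist_image isometry_subtype_coe
    simpa only [h2, Function.comp_apply] using h1
  set hd : ℕ → ℝ := fun j => hausdorffDist (K (φ j)) Kl with hhd_def
  -- Kl is compact, nonempty
  have hKl_comp : IsCompact Kl := C.isCompact'.image continuous_subtype_val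
  have hKl_closed : IsClosed Kl := hKl_comp.isClosed
  have hKl_ne : Kl.Nonempty := C.nonempty.image _
  have hfin : ∀ j, EMetric.hausdorffEdist (K (φ j)) Kl ≠ ⊤ := fun j =>
    hausdorffEdist_ne_top_of_nonempty_of_bounded ⟨0, h0K _⟩ hKl_ne
      (hK _).1.isBounded hKl_comp.isBounded
  have hfin' : ∀ j, EMetric.hausdorffEdist Kl (K (φ j)) ≠ ⊤ := fun j => by
    rw [EMetric.hausdorffEdist, hausdorffEDist_comm]; exact hfin j
  -- generic membership criterion
  have hmem : ∀ z : E n, (∀ j, infDist z Kl ≤ 2 * hd j) → z ∈ Kl := by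
    intro z hz
    have h0 : infDist z Kl ≤ 0 := by
      apply ge_of_tendsto' (f := fun j => 2 * hd j) (by simpa using hdist.const_mul 2) hz
    have : infDist z Kl = 0 := le_antisymm h0 infDist_nonneg
    exact (hKl_closed.mem_iff_infDist_zero hKl_ne).mpr this
  -- ball inside Kl
  have hball_Kl : closedBall 0 r ⊆ Kl := by
    intro w hw
    apply hmem
    intro j
    have := infDist_le_hausdorffDist_of_mem (hball (φ j) hw) (hfin j)
    have h2 : 0 ≤ hd j := hausdorffDist_nonneg
    calc infDist w Kl ≤ hd j := this
      _ ≤ 2 * hd j := by linarith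
  -- convexity
  have hKl_conv : Convex ℝ Kl := by
    intro x hx y hy a b ha hb hab
    apply hmem
    intro j
    obtain ⟨xj, hxj, hdx⟩ := (hK (φ j)).1.exists_infDist_eq_dist ⟨0, h0K _⟩ x
    obtain ⟨yj, hyj, hdy⟩ := (hK (φ j)).1.exists_infDist_eq_dist ⟨0, h0K _⟩ y
    have hdx' : dist x xj ≤ hd j := by
      rw [← hdx]
      have := infDist_le_hausdorffDist_of_mem hx (hfin' j)
      rwa [hausdorffDist_comm] at this
    have hdy' : dist y yj ≤ hd j := by
      rw [← hdy]
      have := infDist_le_hausdorffDist_of_mem hy (hfin' j)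
      rwa [hausdorffDist_comm] at this
    set zj := a • xj + b • yj with hzj_def
    have hzjK : zj ∈ K (φ j) := (hK (φ j)).2.1 hxj hyj ha hb hab
    have h6 : infDist zj Kl ≤ hd j := infDist_le_hausdorffDist_of_mem hzjK (hfin j)
    have h5 : infDist (a•x+b•y) Kl ≤ infDist zj Kl + dist (a•x+b•y) zj :=
      infDist_le_infDist_add_dist
    have h7 : dist (a•x+b•y) zj ≤ a * dist x xj + b * dist y yj := by
      calc dist (a•x+b•y) (a•xj+b•yj)
          ≤ dist (a•x+b•y) (a•xj+b•y) + dist (a•xj+b•y) (a•xj+b•yj) := dist_triangle _ _ _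
        _ = dist (a•x) (a•xj) + dist (b•y) (b•yj) := by rw [dist_add_right, dist_add_left]
        _ = a * dist x xj + b * dist y yj := by
            rw [dist_smul₀, dist_smul₀, Real.norm_eq_abs, Real.norm_eq_abs,
              abs_of_nonneg ha, abs_of_nonneg hb]
    have h8 : a * dist x xj + b * dist y yj ≤ hd j := by
      have := hausdorffDist_nonneg (s := K (φ j)) (t := Kl)
      calc a * dist x xj + b * dist y yj ≤ a * hd j + b * hd j := by
            apply add_le_add (mul_le_mul_of_nonneg_left hdx' ha)
              (mul_le_mul_of_nonneg_left hdy' hb)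
        _ = hd j := by rw [← add_mul, hab, one_mul]
    linarith
  have h0int : (0:E n) ∈ interior Kl := by
    apply interior_mono hball_Kl
    rw [interior_closedBall _ hrpos.ne']
    exact mem_ball_self hrpos
  -- volume
  have hVfin : volume (polarBody Kl) ≠ ⊤ := by
    apply ne_of_lt
    calc volume (polarBody Kl) ≤ volume (closedBall (0:E n) r⁻¹) :=
          measure_mono (polar_subset_closedBall hrpos hball_Kl)
      _ < ⊤ := (isCompact_closedBall _ _).measure_lt_top
  set Vr : ℝ := (volume (polarBody Kl)).toReal with hVr_def
  set ωr : ℝ := (unitBallVol n).toReal with hωr_def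
  have hcj : Tendsto (fun j => (1 + hd j / r)^n) atTop (nhds 1) := by
    have h1 : Tendsto (fun j => 1 + hd j / r) atTop (nhds 1) := by
      have := hdist.div_const r
      simpa using tendsto_const_nhds.add this
    simpa using h1.pow n
  have k1r : ∀ j, ωr ≤ (1 + hd j / r)^n * Vr := by
    intro j
    have key := vol_polar_le (A := K (φ j)) (B := Kl) hrpos (hK _).2.1 (hK _).1
      (hball _) hKl_comp hKl_ne
    rw [hvol (φ j), hausdorffDist_comm] at key
    have := ENNReal.toReal_le_toReal unitBallVol_ne_top
      (ENNReal.mul_ne_top ENNReal.ofReal_ne_top hVfin) |>.mpr key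
    rwa [ENNReal.toReal_mul, ENNReal.toReal_ofReal
      (pow_nonneg (add_nonneg zero_le_one (div_nonneg hausdorffDist_nonneg hrpos.le)) n)] at this
  have k2r : ∀ j, Vr ≤ (1 + hd j / r)^n * ωr := by
    intro j
    have key := vol_polar_le (A := Kl) (B := K (φ j)) hrpos hKl_conv hKl_comp
      hball_Kl (hK _).1 ⟨0, h0K _⟩
    rw [hvol (φ j)] at key
    have := ENNReal.toReal_le_toReal hVfin
      (ENNReal.mul_ne_top ENNReal.ofReal_ne_top unitBallVol_ne_top) |>.mpr key
    rwa [ENNReal.toReal_mul, ENNReal.toReal_ofReal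
      (pow_nonneg (add_nonneg zero_le_one (div_nonneg hausdorffDist_nonneg hrpos.le)) n)] at this
  have hle1 : ωr ≤ Vr := by
    have hlim : Tendsto (fun j => (1 + hd j / r)^n * Vr) atTop (nhds Vr) := by
      simpa using hcj.mul_const Vr
    exact ge_of_tendsto' hlim k1r
  have hle2 : Vr ≤ ωr := by
    have hlim : Tendsto (fun j => (1 + hd j / r)^n * ωr) atTop (nhds ωr) := by
      simpa using hcj.mul_const ωr
    exact ge_of_tendsto' hlim k2r
  have hVeq : volume (polarBody Kl) = unitBallVol n :=
    (ENNReal.toReal_eq_toReal_iff' hVfin unitBallVol_ne_top).mp (le_antisymm hle2 hle1)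
  exact ⟨φ, Kl, hφ, ⟨hKl_comp, hKl_conv, h0int⟩, hdist, hVeq⟩
end
end

section
/- Let μ be a nonzero finite discrete measure on S^{n-1} supported on finitely many directions u₁,…,u_m that are not contained in any closed hemisphere, and let φ : (0,∞) → (0,∞) be continuous and strictly increasing with φ(0⁺)=0, φ(1)=1, φ(∞)=∞. If M is a convex body with the origin in its interior, |M°| = ω_n, minimizing ∫ φ(h_L)dμ among all such bodies L with |L°| = ω_n, then M equals the polytope P = ∩_{i=1}^m {x : ⟨x,u_i⟩ ≤ h_M(u_i)}. -/
open MeasureTheory Metric Filter Set ENNReal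

open Pointwise

noncomputable section

lemma aux_polar_closed {n : ℕ} (K : Set (E n)) : IsClosed (polarBody K) := by
  have : polarBody K = ⋂ x ∈ K, {y : E n | (inner ℝ x y : ℝ) ≤ 1} := by
    ext y; simp [polarBody]
  rw [this]
  exact isClosed_biInter fun x _ =>
    isClosed_le (continuous_const.inner continuous_id) continuous_const

lemma aux_polar_anti {n : ℕ} {K L : Set (E n)} (h : K ⊆ L) : polarBody L ⊆ polarBody K :=
  fun y hy x hx => hy x (h hx)

-- polar of a set inside a ball contains a small ball
lemma aux_ball_subset_polar {n : ℕ} {K : Set (E n)} {R : ℝ} (hR : 0 < R)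
    (hK : K ⊆ closedBall 0 R) : closedBall (0 : E n) R⁻¹ ⊆ polarBody K := by
  intro y hy x hx
  have h1 : ‖x‖ ≤ R := by simpa [mem_closedBall, dist_zero_right] using hK hx
  have h2 : ‖y‖ ≤ R⁻¹ := by simpa [mem_closedBall, dist_zero_right] using hy
  calc (inner ℝ x y : ℝ) ≤ ‖x‖ * ‖y‖ := real_inner_le_norm x y
    _ ≤ R * R⁻¹ := by
        apply mul_le_mul h1 h2 (norm_nonneg _) hR.le
    _ = 1 := mul_inv_cancel₀ hR.ne'

-- polar of a set containing a ball is inside a ball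
lemma aux_polar_subset_ball {n : ℕ} {K : Set (E n)} {r : ℝ} (hr : 0 < r)
    (hK : ball (0 : E n) r ⊆ K) : polarBody K ⊆ closedBall 0 (2 / r) := by
  intro y hy
  rcases eq_or_ne y 0 with rfl | hy0
  · simp [mem_closedBall, dist_zero_right]; positivity
  · have hny : 0 < ‖y‖ := norm_pos_iff.2 hy0
    have hx : (r / 2) • (‖y‖⁻¹ • y) ∈ K := by
      apply hK
      rw [mem_ball_zero_iff, norm_smul, norm_smul, norm_inv, norm_norm,
        inv_mul_cancel₀ hny.ne', mul_one, Real.norm_eq_abs, abs_of_pos (by linarith)]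
      linarith
    have := hy _ hx
    rw [real_inner_smul_left, real_inner_smul_left, real_inner_self_eq_norm_mul_norm] at this
    have h2 : r / 2 * (‖y‖⁻¹ * (‖y‖ * ‖y‖)) = r / 2 * ‖y‖ := by
      field_simp
    rw [h2] at this
    rw [mem_closedBall, dist_zero_right, le_div_iff₀ hr]
    nlinarith

lemma aux_integral {α : Type*} [MeasurableSpace α] [MeasurableSingletonClass α]
    {m : ℕ} (u : Fin m → α) (lam : Fin m → ℝ) (hlam : ∀ i, 0 ≤ lam i) (f : α → ℝ) :
    ∫ w, f w ∂(∑ i : Fin m, ENNReal.ofReal (lam i) • Measure.dirac (u i))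
      = ∑ i : Fin m, lam i * f (u i) := by
  have hint : ∀ i : Fin m, Integrable f (ENNReal.ofReal (lam i) • Measure.dirac (u i)) := by
    intro i
    have h1 : Integrable f (Measure.dirac (u i)) :=
      (integrable_const (f (u i))).congr (ae_eq_dirac f).symm
    exact h1.smul_measure ENNReal.ofReal_ne_top
  rw [integral_finset_sum_measure (fun i _ => hint i)]
  refine Finset.sum_congr rfl fun i _ => ?_
  rw [integral_smul_measure, integral_dirac, ENNReal.toReal_ofReal (hlam i), smul_eq_mul]

lemma aux_supportFn_smul {n : ℕ} (K : Set (E n)) {t : ℝ} (ht : 0 ≤ t) (v : E n) :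
    supportFn (t • K) v = t * supportFn K v := by
  have himg : (fun x => (inner ℝ x v : ℝ)) '' (t • K)
      = t • ((fun x => (inner ℝ x v : ℝ)) '' K) := by
    ext c
    constructor
    · rintro ⟨x, ⟨y, hy, rfl⟩, rfl⟩
      exact ⟨inner ℝ y v, ⟨y, hy, rfl⟩, (real_inner_smul_left y v t).symm⟩
    · rintro ⟨c, ⟨y, hy, rfl⟩, rfl⟩
      exact ⟨t • y, Set.smul_mem_smul_set hy, real_inner_smul_left y v t⟩
  rw [supportFn, himg, Real.sSup_smul_of_nonneg ht, smul_eq_mul, supportFn]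

lemma aux_polar_smul {n : ℕ} (K : Set (E n)) {t : ℝ} (ht : 0 < t) :
    polarBody (t • K) = t⁻¹ • polarBody K := by
  have key : ∀ y : E n, y ∈ polarBody (t • K) ↔ t • y ∈ polarBody K := by
    intro y
    constructor
    · intro h x hx
      have := h (t • x) (Set.smul_mem_smul_set hx)
      rwa [real_inner_smul_left, ← real_inner_smul_right] at this
    · rintro h x ⟨x', hx', rfl⟩
      have := h x' hx'
      rw [real_inner_smul_left, ← real_inner_smul_right]
      exact this
  ext y
  rw [Set.mem_inv_smul_set_iff₀ ht.ne']
  exact key y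

theorem discrete_minimizer_is_polytope {n m : ℕ}
    (u : Fin m → Sph n) (lam : Fin m → ℝ) (hlam : ∀ i, 0 < lam i)
    (hhemi : ∀ v : Sph n, ∃ i, 0 < (inner ℝ (u i : E n) (v : E n) : ℝ))
    (μ : Measure (Sph n))
    (hμ : μ = ∑ i : Fin m, ENNReal.ofReal (lam i) • Measure.dirac (u i))
    (φ : ℝ → ℝ) (hφc : ContinuousOn φ (Ioi 0)) (hφmono : StrictMonoOn φ (Ioi 0))
    (hφpos : ∀ t ∈ Ioi (0 : ℝ), 0 < φ t)
    (hφ0 : Tendsto φ (nhdsWithin 0 (Ioi 0)) (nhds 0))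
    (hφ1 : φ 1 = 1) (hφtop : Tendsto φ atTop atTop)
    (M : Set (E n)) (hM : IsBody M)
    (hMvol : volume (polarBody M) = unitBallVol n)
    (hmin : ∀ L : Set (E n), IsBody L → volume (polarBody L) = unitBallVol n →
      ∫ w : Sph n, φ (supportFn M (w : E n)) ∂μ ≤ ∫ w : Sph n, φ (supportFn L (w : E n)) ∂μ) :
    M = ⋂ i : Fin m, {x : E n | (inner ℝ x (u i : E n) : ℝ) ≤ supportFn M (u i : E n)} := by
  obtain ⟨hMc, hMconv, hMint⟩ := hM
  have hM0 : (0 : E n) ∈ M := interior_subset hMint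
  have hMne : M.Nonempty := ⟨0, hM0⟩
  obtain ⟨r, hr, hrM⟩ : ∃ r > 0, ball (0 : E n) r ⊆ M :=
    Metric.mem_nhds_iff.1 (mem_interior_iff_mem_nhds.1 hMint)
  obtain ⟨R, hR, hMR⟩ := hMc.isBounded.subset_closedBall_lt 0 0
  have hbdd : ∀ v : E n, BddAbove ((fun x => (inner ℝ x v : ℝ)) '' M) := fun v =>
    (hMc.image (continuous_id.inner continuous_const)).bddAbove
  have hmemle : ∀ v : E n, ∀ x ∈ M, (inner ℝ x v : ℝ) ≤ supportFn M v := fun v x hx =>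
    le_csSup (hbdd v) ⟨x, hx, rfl⟩
  set P := ⋂ i : Fin m, {x : E n | (inner ℝ x (u i : E n) : ℝ) ≤ supportFn M (u i : E n)}
    with hPdef
  have hMsubP : M ⊆ P := fun x hx => Set.mem_iInter.2 fun i => hmemle (u i) x hx
  suffices hPM : P ⊆ M from Set.Subset.antisymm hMsubP hPM
  rcases Nat.eq_zero_or_pos n with hn0 | hn
  · subst hn0
    haveI : Subsingleton (E 0) := by
      constructor; intro a b; ext i; exact i.elim0
    intro x _
    have : x = 0 := Subsingleton.elim x 0
    rwa [this]
  -- n ≥ 1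
  have hv₀ : (EuclideanSpace.single (⟨0, hn⟩ : Fin n) (1:ℝ)) ∈ Metric.sphere (0 : E n) 1 := by
    simp [EuclideanSpace.norm_single]
  obtain ⟨i₀, _⟩ := hhemi ⟨_, hv₀⟩
  haveI : Nonempty (Fin m) := ⟨i₀⟩
  have hne : (Finset.univ : Finset (Fin m)).Nonempty := Finset.univ_nonempty
  have hunorm : ∀ i, ‖(u i : E n)‖ = 1 := fun i => by
    have := (u i).2; rwa [mem_sphere_zero_iff_norm] at this
  -- support values are positive
  have hpos : ∀ i, 0 < supportFn M (u i : E n) := by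
    intro i
    have hx : (r/2) • (u i : E n) ∈ M := by
      apply hrM
      rw [mem_ball_zero_iff, norm_smul, hunorm, mul_one, Real.norm_eq_abs,
        abs_of_pos (by linarith)]
      linarith
    have h1 := hmemle (u i) _ hx
    rw [real_inner_smul_left, real_inner_self_eq_norm_mul_norm, hunorm] at h1
    nlinarith
  -- uniform positivity over the sphere
  obtain ⟨ε, hε, hεle⟩ :
      ∃ ε > 0, ∀ w : E n, ‖w‖ = 1 → ∃ i, ε ≤ (inner ℝ w (u i : E n) : ℝ) := by
    set g : E n → ℝ := fun w => Finset.univ.sup' hne (fun i => (inner ℝ w (u i : E n) : ℝ))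
      with hgdef
    have hgcont : Continuous g := continuous_iff_continuousAt.2 fun x =>
      ContinuousAt.finset_sup'_apply hne fun i _ =>
        (continuous_id.inner continuous_const).continuousAt
    obtain ⟨w₀, hw₀, hwmin⟩ := (isCompact_sphere (0 : E n) 1).exists_isMinOn
      ⟨_, hv₀⟩ hgcont.continuousOn
    obtain ⟨j, hj⟩ := hhemi ⟨w₀, hw₀⟩
    refine ⟨g w₀, ?_, ?_⟩
    · have : (inner ℝ w₀ (u j : E n) : ℝ) ≤ g w₀ :=
        Finset.le_sup' (fun i => (inner ℝ w₀ (u i : E n) : ℝ)) (Finset.mem_univ j)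
      rw [real_inner_comm] at this
      linarith
    · intro w hw
      have h1 : g w₀ ≤ g w := (isMinOn_iff.1 hwmin) w (by rwa [mem_sphere_zero_iff_norm])
      obtain ⟨j', _, hj'⟩ := Finset.exists_mem_eq_sup' hne
        (fun i => (inner ℝ w (u i : E n) : ℝ))
      exact ⟨j', by rw [← hj']; exact h1⟩
  set maxh := Finset.univ.sup' hne (fun i => supportFn M (u i : E n)) with hmaxh
  have hmaxh0 : 0 < maxh :=
    lt_of_lt_of_le (hpos i₀)
      (Finset.le_sup' (fun i => supportFn M (u i : E n)) (Finset.mem_univ i₀))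
  have hC : 0 < maxh / ε := div_pos hmaxh0 hε
  have hPmem : ∀ x ∈ P, ∀ i, (inner ℝ x (u i : E n) : ℝ) ≤ supportFn M (u i : E n) :=
    fun x hx i => Set.mem_iInter.1 hx i
  have hPball : P ⊆ closedBall 0 (maxh / ε) := by
    intro x hx
    rw [mem_closedBall, dist_zero_right]
    rcases eq_or_ne x 0 with rfl | hx0
    · simpa using hC.le
    · have hnx : 0 < ‖x‖ := norm_pos_iff.2 hx0
      have hw : ‖(‖x‖⁻¹ • x)‖ = 1 := by
        rw [norm_smul, norm_inv, norm_norm, inv_mul_cancel₀ hnx.ne']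
      obtain ⟨i, hi⟩ := hεle _ hw
      rw [real_inner_smul_left] at hi
      have h2 := hPmem x hx i
      have h3 : supportFn M (u i : E n) ≤ maxh :=
        Finset.le_sup' (fun i => supportFn M (u i : E n)) (Finset.mem_univ i)
      rw [le_div_iff₀ hε]
      have h4 : ‖x‖⁻¹ * ‖x‖ = 1 := inv_mul_cancel₀ hnx.ne'
      nlinarith
  have hPclosed : IsClosed P := isClosed_iInter fun i =>
    isClosed_le (continuous_id.inner continuous_const) continuous_const
  have hPcomp : IsCompact P :=
    (isCompact_closedBall (0 : E n) (maxh / ε)).of_isClosed_subset hPclosed hPball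
  have hPconv : Convex ℝ P := convex_iInter fun i => by
    intro x hx y hy a b ha hb hab
    simp only [Set.mem_setOf_eq] at *
    rw [inner_add_left, real_inner_smul_left, real_inner_smul_left]
    calc a * (inner ℝ x (u i : E n) : ℝ) + b * inner ℝ y (u i : E n)
        ≤ a * supportFn M (u i : E n) + b * supportFn M (u i : E n) :=
          add_le_add (mul_le_mul_of_nonneg_left hx ha) (mul_le_mul_of_nonneg_left hy hb)
      _ = supportFn M (u i : E n) := by rw [← add_mul, hab, one_mul]
  have hδ0 : 0 < Finset.univ.inf' hne (fun i => supportFn M (u i : E n)) := by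
    rw [Finset.lt_inf'_iff]
    exact fun i _ => hpos i
  have hballP : ball (0 : E n) (Finset.univ.inf' hne (fun i => supportFn M (u i : E n))) ⊆ P := by
    intro x hx
    rw [mem_ball_zero_iff] at hx
    refine Set.mem_iInter.2 fun i => ?_
    have h1 : (inner ℝ x (u i : E n) : ℝ) ≤ ‖x‖ * ‖(u i : E n)‖ := real_inner_le_norm _ _
    rw [hunorm, mul_one] at h1
    have h2 := Finset.inf'_le (fun i => supportFn M (u i : E n)) (Finset.mem_univ i)
    exact le_trans h1 (le_of_lt (lt_of_lt_of_le hx h2))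
  have hP0int : (0 : E n) ∈ interior P :=
    mem_interior.2 ⟨_, hballP, isOpen_ball, mem_ball_self hδ0⟩
  have hPbody : IsBody P := ⟨hPcomp, hPconv, hP0int⟩
  have hP0 : (0 : E n) ∈ P := interior_subset hP0int
  have hPne : P.Nonempty := ⟨0, hP0⟩
  have hPbdd : ∀ v : E n, BddAbove ((fun x => (inner ℝ x v : ℝ)) '' P) := fun v =>
    (hPcomp.image (continuous_id.inner continuous_const)).bddAbove
  have hPsupp : ∀ i, supportFn P (u i : E n) = supportFn M (u i : E n) := by
    intro i
    apply le_antisymm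
    · apply csSup_le (hPne.image _)
      rintro _ ⟨x, hx, rfl⟩
      exact hPmem x hx i
    · exact csSup_le_csSup (hPbdd _) (hMne.image _) (Set.image_mono hMsubP)
  -- polar volume facts
  have hω0 : unitBallVol n ≠ 0 := by
    have h1 : (0 : ℝ≥0∞) < volume (ball (0 : E n) 1) := measure_ball_pos volume 0 one_pos
    intro h
    exact absurd (le_trans (measure_mono ball_subset_closedBall) h.le) (not_le.2 h1)
  have hωtop : unitBallVol n ≠ ⊤ := measure_closedBall_lt_top.ne
  have hPpolar_sub : polarBody P ⊆ polarBody M := aux_polar_anti hMsubP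
  have hcle : volume (polarBody P) ≤ unitBallVol n :=
    hMvol ▸ measure_mono hPpolar_sub
  have hc0 : volume (polarBody P) ≠ 0 := by
    have h1 := aux_ball_subset_polar hC hPball
    have h2 : (0 : ℝ≥0∞) < volume (ball (0 : E n) (maxh/ε)⁻¹) :=
      measure_ball_pos volume 0 (by positivity)
    exact fun h => absurd
      (le_trans (measure_mono (ball_subset_closedBall.trans h1)) h.le) (not_le.2 h2)
  have hctop : volume (polarBody P) ≠ ⊤ :=
    (lt_of_le_of_lt hcle (lt_top_iff_ne_top.2 hωtop)).ne
  rcases lt_or_eq_of_le hcle with hlt | heq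
  · -- scaling argument: contradiction
    exfalso
    set a := (volume (polarBody P)).toReal with hadef
    set b := (unitBallVol n).toReal with hbdef
    have ha : 0 < a := ENNReal.toReal_pos hc0 hctop
    have hb : 0 < b := ENNReal.toReal_pos hω0 hωtop
    have hab : a < b := ENNReal.toReal_strict_mono hωtop hlt
    set t := (a / b) ^ ((n : ℝ)⁻¹) with htdef
    have ht0 : 0 < t := Real.rpow_pos_of_pos (div_pos ha hb) _
    have ht1 : t < 1 :=
      Real.rpow_lt_one (div_nonneg ha.le hb.le) ((div_lt_one hb).2 hab) (by positivity)
    have htn : t ^ n = a / b := by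
      rw [htdef, ← Real.rpow_natCast ((a / b) ^ ((n : ℝ)⁻¹)) n,
        ← Real.rpow_mul (div_nonneg ha.le hb.le),
        inv_mul_cancel₀ (Nat.cast_ne_zero.2 hn.ne' : (n : ℝ) ≠ 0), Real.rpow_one]
    set L := t • P with hLdef
    have hLbody : IsBody L := by
      refine ⟨hPcomp.smul t, hPconv.smul t, ?_⟩
      rw [interior_smul₀ ht0.ne']
      exact Set.mem_smul_set.2 ⟨0, hP0int, smul_zero t⟩
    have hLvol : volume (polarBody L) = unitBallVol n := by
      rw [hLdef, aux_polar_smul P ht0,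
        Measure.addHaar_smul_of_nonneg volume (inv_nonneg.2 ht0.le),
        finrank_euclideanSpace_fin]
      have h1 : t⁻¹ ^ n = b / a := by rw [inv_pow, htn, inv_div]
      have h2 : volume (polarBody P) = ENNReal.ofReal a := (ENNReal.ofReal_toReal hctop).symm
      rw [h1, h2, ← ENNReal.ofReal_mul (by positivity), div_mul_cancel₀ _ ha.ne']
      exact ENNReal.ofReal_toReal hωtop
    have hkey := hmin L hLbody hLvol
    rw [hμ, aux_integral u lam (fun i => (hlam i).le),
      aux_integral u lam (fun i => (hlam i).le)] at hkey
    have hstrict : ∑ i : Fin m, lam i * φ (supportFn L (u i : E n))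
        < ∑ i : Fin m, lam i * φ (supportFn M (u i : E n)) := by
      apply Finset.sum_lt_sum_of_nonempty hne
      intro i _
      have hLsupp : supportFn L (u i : E n) = t * supportFn M (u i : E n) := by
        rw [hLdef, aux_supportFn_smul P ht0.le, hPsupp i]
      have h1 : t * supportFn M (u i : E n) < supportFn M (u i : E n) := by
        nlinarith [hpos i]
      have h2 := hφmono (Set.mem_Ioi.2 (mul_pos ht0 (hpos i)))
        (Set.mem_Ioi.2 (hpos i)) h1
      rw [hLsupp]
      exact mul_lt_mul_of_pos_left h2 (hlam i)
    exact (hstrict.trans_le hkey).false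
  · -- equality case: P ⊆ M
    intro z hzP
    by_contra hzM
    have hz0 : z ≠ 0 := fun h => hzM (h ▸ hM0)
    have hnz : 0 < ‖z‖ := norm_pos_iff.2 hz0
    obtain ⟨f, s₀, hfs, hsz⟩ := geometric_hahn_banach_closed_point hMconv hMc.isClosed hzM
    set v := (InnerProductSpace.toDual ℝ (E n)).symm f with hvdef
    have hv : ∀ x : E n, (inner ℝ v x : ℝ) = f x := fun x =>
      InnerProductSpace.toDual_symm_apply
    have hs₀ : 0 < s₀ := by have := hfs 0 hM0; rwa [map_zero] at this
    have hzv : s₀ < (inner ℝ z v : ℝ) := by rw [real_inner_comm, hv]; exact hsz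
    have hA_le : supportFn M v ≤ s₀ := by
      apply csSup_le (hMne.image _)
      rintro _ ⟨x, hx, rfl⟩
      show (inner ℝ x v : ℝ) ≤ s₀
      rw [real_inner_comm, hv]
      exact (hfs x hx).le
    have hA0 : 0 ≤ supportFn M v := by
      have := hmemle v 0 hM0
      rwa [inner_zero_left] at this
    set A := supportFn M v with hAdef
    set c₀ := (A + inner ℝ z v) / 2 with hc₀def
    have hAc : A < c₀ := by
      have := lt_of_le_of_lt hA_le hzv
      rw [hc₀def]; linarith
    have hc₀z : c₀ < (inner ℝ z v : ℝ) := by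
      have := lt_of_le_of_lt hA_le hzv
      rw [hc₀def]; linarith
    have hc₀ : 0 < c₀ := lt_of_le_of_lt hA0 hAc
    set y := c₀⁻¹ • v with hydef
    set s := A / c₀ with hsdef
    have hs1 : s < 1 := (div_lt_one hc₀).2 hAc
    have hyM : ∀ x ∈ M, (inner ℝ x y : ℝ) ≤ s := by
      intro x hx
      rw [hydef, real_inner_smul_right, hsdef, div_eq_inv_mul]
      exact mul_le_mul_of_nonneg_left (hmemle v x hx) (inv_nonneg.2 hc₀.le)
    have hzy : 1 < (inner ℝ z y : ℝ) := by
      rw [hydef, real_inner_smul_right, inv_mul_eq_div]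
      exact (one_lt_div hc₀).2 hc₀z
    set ρ := min ((1 - s) / R) (((inner ℝ z y : ℝ) - 1) / (2 * ‖z‖)) with hρdef
    have hρ : 0 < ρ := by
      apply lt_min
      · apply div_pos (by linarith) hR
      · apply div_pos (by linarith) (by positivity)
    have hball_sub : ball y ρ ⊆ polarBody M := by
      intro y' hy' x hx
      have h1 : (inner ℝ x y' : ℝ) = inner ℝ x y + inner ℝ x (y' - y) := by
        rw [← inner_add_right]
        norm_num
      have h2 : (inner ℝ x (y' - y) : ℝ) ≤ ‖x‖ * ‖y' - y‖ := real_inner_le_norm _ _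
      have hxR : ‖x‖ ≤ R := by
        have := hMR hx; rwa [mem_closedBall, dist_zero_right] at this
      have hyd : ‖y' - y‖ ≤ ρ := by
        rw [← dist_eq_norm]
        exact le_of_lt (by rwa [mem_ball] at hy')
      have h3 : ‖x‖ * ‖y' - y‖ ≤ R * ((1 - s) / R) :=
        mul_le_mul hxR (hyd.trans (min_le_left _ _)) (norm_nonneg _) hR.le
      have h4 : R * ((1 - s) / R) = 1 - s := by field_simp
      have h5 := hyM x hx
      rw [h1]
      linarith
    have hball_nP : ∀ y' ∈ ball y ρ, y' ∉ polarBody P := by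
      intro y' hy' hy'P
      have hzy' := hy'P z hzP
      have h1 : (inner ℝ z y' : ℝ) = inner ℝ z y - inner ℝ z (y - y') := by
        rw [← inner_sub_right]
        norm_num
      have h2 : (inner ℝ z (y - y') : ℝ) ≤ ‖z‖ * ‖y - y'‖ := real_inner_le_norm _ _
      have hyd : ‖y - y'‖ ≤ ρ := by
        rw [← dist_eq_norm, dist_comm]
        exact le_of_lt (by rwa [mem_ball] at hy')
      have h3 : ‖z‖ * ‖y - y'‖ ≤ ‖z‖ * (((inner ℝ z y : ℝ) - 1) / (2 * ‖z‖)) :=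
        mul_le_mul_of_nonneg_left (hyd.trans (min_le_right _ _)) (norm_nonneg _)
      have h4 : ‖z‖ * (((inner ℝ z y : ℝ) - 1) / (2 * ‖z‖)) = ((inner ℝ z y : ℝ) - 1) / 2 := by
        field_simp
      linarith
    have hdisj : Disjoint (polarBody P) (ball y ρ) :=
      Set.disjoint_left.2 fun w hwP hwB => hball_nP w hwB hwP
    have hunion : polarBody P ∪ ball y ρ ⊆ polarBody M :=
      Set.union_subset hPpolar_sub hball_sub
    have hvol : volume (polarBody P) + volume (ball y ρ) ≤ unitBallVol n := by
      rw [← measure_union hdisj measurableSet_ball, ← hMvol]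
      exact measure_mono hunion
    rw [heq] at hvol
    have hb0 : volume (ball y ρ) ≠ 0 := (measure_ball_pos volume y hρ).ne'
    exact absurd hvol (not_le.2 (ENNReal.lt_add_right hωtop hb0))
end
end

section
/- Let μ = Σ_{i=1}^m λ_i δ_{u_i} (λ_i > 0) be a discrete measure on S^{n-1} whose support is not contained in any closed hemisphere, and suppose μ({u₁}) > 0. If φ : (0,∞) → (0,∞) is continuous, strictly increasing with φ(t) → ∞ as t → ∞, then sup{ ∫_{S^{n-1}} φ(h_L) dμ : L a convex body with origin interior and |L°| = ω_n } = ∞. -/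
open MeasureTheory Metric Filter Set ENNReal

noncomputable section

open Pointwise

namespace DiscreteSupAux

variable {n : ℕ}

lemma halfspace_convex (w : E n) (r : ℝ) : Convex ℝ {x : E n | (inner ℝ x w : ℝ) ≤ r} :=
  convex_halfSpace_le ⟨fun a b => inner_add_left a b w, fun c a => real_inner_smul_left a w c⟩ r

lemma halfspace_closed (w : E n) (r : ℝ) : IsClosed {x : E n | (inner ℝ x w : ℝ) ≤ r} :=
  isClosed_le (Continuous.inner continuous_id continuous_const) continuous_const

/-- The body: closed convex hull of the unit ball together with the point `R • u₁`. -/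
def bodyK (u₁ : E n) (R : ℝ) : Set (E n) :=
  closure (convexHull ℝ (closedBall 0 1 ∪ {R • u₁}))

lemma bodyK_subset_halfspace {u₁ : E n} {R : ℝ} {w : E n} {r : ℝ}
    (h1 : ∀ x ∈ closedBall (0 : E n) 1, (inner ℝ x w : ℝ) ≤ r)
    (h2 : (inner ℝ (R • u₁) w : ℝ) ≤ r) :
    bodyK u₁ R ⊆ {x : E n | (inner ℝ x w : ℝ) ≤ r} := by
  refine closure_minimal (convexHull_min ?_ (halfspace_convex w r)) (halfspace_closed w r)
  rintro x (hx | hx)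
  · exact h1 x hx
  · rw [Set.mem_singleton_iff] at hx; subst hx; exact h2

lemma ball_subset_bodyK (u₁ : E n) (R : ℝ) : closedBall (0 : E n) 1 ⊆ bodyK u₁ R :=
  fun x hx => subset_closure (subset_convexHull ℝ _ (Or.inl hx))

lemma point_mem_bodyK (u₁ : E n) (R : ℝ) : R • u₁ ∈ bodyK u₁ R :=
  subset_closure (subset_convexHull ℝ _ (Or.inr rfl))

lemma isCompact_bodyK (u₁ : E n) (R : ℝ) : IsCompact (bodyK u₁ R) := by
  apply isCompact_of_isClosed_isBounded isClosed_closure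
  apply Bornology.IsBounded.closure
  rw [isBounded_convexHull]
  exact (isBounded_closedBall).union (Bornology.isBounded_singleton)

lemma convex_bodyK (u₁ : E n) (R : ℝ) : Convex ℝ (bodyK u₁ R) :=
  (convex_convexHull ℝ _).closure

lemma isGreatest_bodyK {u₁ : E n} (hu₁ : ‖u₁‖ = 1) {R : ℝ} (hR : 1 ≤ R)
    {w : E n} (hw : ‖w‖ = 1) :
    IsGreatest ((fun x => (inner ℝ x w : ℝ)) '' bodyK u₁ R) (max 1 (R * inner ℝ u₁ w)) := by
  constructor
  · rcases le_total (R * (inner ℝ u₁ w : ℝ)) 1 with h | h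
    · rw [max_eq_left h]
      refine ⟨w, ball_subset_bodyK u₁ R ?_, ?_⟩
      · rw [mem_closedBall_zero_iff, hw]
      · simp only
        rw [real_inner_self_eq_norm_mul_norm, hw, one_mul]
    · rw [max_eq_right h]
      exact ⟨R • u₁, point_mem_bodyK u₁ R, real_inner_smul_left u₁ w R⟩
  · rintro y ⟨x, hx, rfl⟩
    refine bodyK_subset_halfspace (fun z hz => ?_) ?_ hx
    · refine le_trans (real_inner_le_norm z w) (le_trans ?_ (le_max_left _ _))
      rw [mem_closedBall_zero_iff] at hz
      calc ‖z‖ * ‖w‖ ≤ 1 * 1 := by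
            apply mul_le_mul hz (le_of_eq hw) (norm_nonneg w) zero_le_one
        _ = 1 := one_mul 1
    · rw [real_inner_smul_left]
      exact le_max_right _ _

lemma polar_bodyK {u₁ : E n} (hu₁ : ‖u₁‖ = 1) {R : ℝ} (hR : 1 ≤ R) :
    polarBody (bodyK u₁ R) =
      closedBall 0 1 ∩ {y : E n | (inner ℝ (R • u₁) y : ℝ) ≤ 1} := by
  ext y
  simp only [polarBody, Set.mem_setOf_eq, Set.mem_inter_iff]
  constructor
  · intro hy
    refine ⟨?_, hy _ (point_mem_bodyK u₁ R)⟩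
    rw [mem_closedBall_zero_iff]
    by_cases h0 : y = 0
    · simp [h0]
    · have h1 := hy (‖y‖⁻¹ • y) ?_
      · rw [real_inner_smul_left, real_inner_self_eq_norm_mul_norm] at h1
        have hy0 : (0:ℝ) < ‖y‖ := norm_pos_iff.mpr h0
        calc ‖y‖ = ‖y‖⁻¹ * (‖y‖ * ‖y‖) := by field_simp
          _ ≤ 1 := h1
      · apply ball_subset_bodyK
        rw [mem_closedBall_zero_iff, norm_smul, norm_inv, norm_norm]
        rw [inv_mul_cancel₀ (norm_ne_zero_iff.mpr h0)]
  · rintro ⟨hy1, hy2⟩ x hx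
    refine bodyK_subset_halfspace (fun z hz => ?_) hy2 hx
    refine le_trans (real_inner_le_norm z y) ?_
    rw [mem_closedBall_zero_iff] at hz hy1
    calc ‖z‖ * ‖y‖ ≤ 1 * 1 := mul_le_mul hz hy1 (norm_nonneg y) zero_le_one
      _ = 1 := one_mul 1

lemma smallBall_subset_polar {u₁ : E n} (hu₁ : ‖u₁‖ = 1) {R : ℝ} (hR : 0 < R) :
    closedBall (-((2:ℝ)⁻¹ • u₁)) 2⁻¹ ⊆
      closedBall 0 1 ∩ {y : E n | (inner ℝ (R • u₁) y : ℝ) ≤ 1} := by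
  intro y hy
  rw [mem_closedBall, dist_eq_norm, sub_neg_eq_add] at hy
  have hnormu : ‖(2:ℝ)⁻¹ • u₁‖ = 2⁻¹ := by
    rw [norm_smul, hu₁, Real.norm_eq_abs]; norm_num
  constructor
  · rw [mem_closedBall_zero_iff]
    calc ‖y‖ = ‖(y + (2:ℝ)⁻¹ • u₁) - (2:ℝ)⁻¹ • u₁‖ := by rw [add_sub_cancel_right]
      _ ≤ ‖y + (2:ℝ)⁻¹ • u₁‖ + ‖(2:ℝ)⁻¹ • u₁‖ := norm_sub_le _ _
      _ ≤ 2⁻¹ + 2⁻¹ := by rw [hnormu]; exact add_le_add_left hy _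
      _ = 1 := by norm_num
  · rw [Set.mem_setOf_eq, real_inner_smul_left]
    have h1 : (inner ℝ u₁ y : ℝ) ≤ 0 := by
      have h2 : (inner ℝ u₁ (y + (2:ℝ)⁻¹ • u₁) : ℝ) ≤ 2⁻¹ := by
        calc (inner ℝ u₁ (y + (2:ℝ)⁻¹ • u₁) : ℝ) ≤ ‖u₁‖ * ‖y + (2:ℝ)⁻¹ • u₁‖ :=
              real_inner_le_norm _ _
          _ ≤ 1 * 2⁻¹ := by rw [hu₁]; exact mul_le_mul_of_nonneg_left hy zero_le_one
          _ = 2⁻¹ := one_mul _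
      rw [inner_add_right, real_inner_smul_right, real_inner_self_eq_norm_mul_norm, hu₁] at h2
      linarith
    calc R * (inner ℝ u₁ y : ℝ) ≤ R * 0 := mul_le_mul_of_nonneg_left h1 hR.le
      _ ≤ 1 := by norm_num

end DiscreteSupAux

open DiscreteSupAux

theorem discrete_sup_infinite_increasing {n m : ℕ} (hm : 0 < m)
    (u : Fin m → Sph n) (lam : Fin m → ℝ) (hlam : ∀ i, 0 < lam i)
    (hhemi : ∀ v : Sph n, ∃ i, 0 < (inner ℝ (u i : E n) (v : E n) : ℝ))
    (μ : Measure (Sph n))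
    (hμ : μ = ∑ i : Fin m, ENNReal.ofReal (lam i) • Measure.dirac (u i))
    (φ : ℝ → ℝ) (hφc : ContinuousOn φ (Ioi 0)) (hφmono : StrictMonoOn φ (Ioi 0))
    (hφpos : ∀ t ∈ Ioi (0 : ℝ), 0 < φ t)
    (hφtop : Tendsto φ atTop atTop) :
    ∀ C : ℝ, ∃ L : Set (E n), IsBody L ∧ volume (polarBody L) = unitBallVol n ∧
      C < ∫ w : Sph n, φ (supportFn L (w : E n)) ∂μ := by
  intro C
  set i₀ : Fin m := ⟨0, hm⟩ with hi₀
  set u₁ : E n := (u i₀ : E n) with hu₁def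
  have hu₁ : ‖u₁‖ = 1 := by
    have := (u i₀).2
    rwa [mem_sphere_zero_iff_norm] at this
  have hn : n ≠ 0 := by
    intro h
    subst h
    have h0 : u₁ = 0 := Subsingleton.elim _ _
    rw [h0] at hu₁
    simp at hu₁
  have hlam₀ : 0 < lam i₀ := hlam i₀
  set M : ℝ := (max C 0 + 1) / lam i₀ with hM
  obtain ⟨t₀, ht₀⟩ := eventually_atTop.mp (hφtop.eventually (eventually_ge_atTop M))
  set R : ℝ := 2 * max t₀ 1 with hRdef
  have hR1 : 1 ≤ R := by
    have : (1:ℝ) ≤ max t₀ 1 := le_max_right _ _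
    rw [hRdef]; linarith
  have hR0 : (0:ℝ) < R := lt_of_lt_of_le one_pos hR1
  set K := bodyK u₁ R with hK
  -- volume of polar of K
  have hpolarK : polarBody K =
      closedBall 0 1 ∩ {y : E n | (inner ℝ (R • u₁) y : ℝ) ≤ 1} := polar_bodyK hu₁ hR1
  have hω0 : unitBallVol n ≠ 0 := (measure_closedBall_pos volume 0 one_pos).ne'
  have hωtop : unitBallVol n ≠ ⊤ := measure_closedBall_lt_top.ne
  set v := volume (polarBody K) with hv
  have hvle : v ≤ unitBallVol n := by
    rw [hv, hpolarK]; exact measure_mono inter_subset_left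
  have hvlow : ENNReal.ofReal ((2:ℝ)⁻¹ ^ n) * unitBallVol n ≤ v := by
    rw [hv, hpolarK]
    calc ENNReal.ofReal ((2:ℝ)⁻¹ ^ n) * unitBallVol n
        = volume (closedBall (-((2:ℝ)⁻¹ • u₁)) 2⁻¹) := by
          rw [Measure.addHaar_closedBall' volume _ (by norm_num : (0:ℝ) ≤ 2⁻¹),
            finrank_euclideanSpace_fin]
          rfl
      _ ≤ _ := measure_mono (smallBall_subset_polar hu₁ hR0)
  have hvtop : v ≠ ⊤ := (lt_of_le_of_lt hvle hωtop.lt_top).ne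
  have hv0 : v ≠ 0 := by
    refine (lt_of_lt_of_le ?_ hvlow).ne'
    exact ENNReal.mul_pos (ENNReal.ofReal_pos.mpr (by positivity)).ne' hω0
  have hvR0 : 0 < v.toReal := ENNReal.toReal_pos hv0 hvtop
  have hωR0 : 0 < (unitBallVol n).toReal := ENNReal.toReal_pos hω0 hωtop
  have hvRle : v.toReal ≤ (unitBallVol n).toReal :=
    (ENNReal.toReal_le_toReal hvtop hωtop).mpr hvle
  have hvRlow : (2:ℝ)⁻¹ ^ n * (unitBallVol n).toReal ≤ v.toReal := by
    have h := ENNReal.toReal_mono hvtop hvlow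
    rwa [ENNReal.toReal_mul, ENNReal.toReal_ofReal (by positivity)] at h
  set c : ℝ := (v.toReal / (unitBallVol n).toReal) ^ ((n : ℝ)⁻¹) with hc
  have hdivpos : 0 < v.toReal / (unitBallVol n).toReal := div_pos hvR0 hωR0
  have hcpos : 0 < c := Real.rpow_pos_of_pos hdivpos _
  have hcpow : c ^ n = v.toReal / (unitBallVol n).toReal :=
    Real.rpow_inv_natCast_pow hdivpos.le hn
  have hchalf : (2:ℝ)⁻¹ ≤ c := by
    have h1 : (((2:ℝ)⁻¹ ^ n) : ℝ) ^ ((n : ℝ)⁻¹) = 2⁻¹ :=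
      Real.pow_rpow_inv_natCast (by norm_num) hn
    rw [← h1, hc]
    apply Real.rpow_le_rpow (by positivity) _ (by positivity)
    rw [le_div_iff₀ hωR0]
    exact hvRlow
  have hcle1 : c ≤ 1 :=
    Real.rpow_le_one hdivpos.le ((div_le_one hωR0).mpr hvRle) (by positivity)
  set L : Set (E n) := c • K with hL
  -- IsBody L
  have hKcompact : IsCompact K := isCompact_bodyK u₁ R
  have hKconv : Convex ℝ K := convex_bodyK u₁ R
  have hball : ball (0 : E n) c ⊆ L := by
    intro x hx
    rw [mem_ball_zero_iff] at hx
    refine Set.mem_smul_set.mpr ⟨c⁻¹ • x, ball_subset_bodyK u₁ R ?_, ?_⟩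
    · rw [mem_closedBall_zero_iff, norm_smul, norm_inv, Real.norm_eq_abs,
        abs_of_pos hcpos]
      rw [inv_mul_le_iff₀ hcpos, mul_one]
      exact hx.le
    · rw [smul_smul, mul_inv_cancel₀ hcpos.ne', one_smul]
  have hbody : IsBody L := by
    refine ⟨hKcompact.smul c, hKconv.smul c, ?_⟩
    exact mem_interior.mpr ⟨ball 0 c, hball, isOpen_ball, mem_ball_self hcpos⟩
  -- support function of L
  have hsuppL : ∀ w : E n, ‖w‖ = 1 →
      supportFn L w = c * max 1 (R * inner ℝ u₁ w) := by
    intro w hw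
    have hg := isGreatest_bodyK hu₁ hR1 hw
    apply IsGreatest.csSup_eq
    constructor
    · obtain ⟨x, hxK, hxv⟩ := hg.1
      refine ⟨c • x, Set.smul_mem_smul_set hxK, ?_⟩
      simp only at hxv ⊢
      rw [real_inner_smul_left, hxv]
    · rintro y ⟨x, hx, rfl⟩
      obtain ⟨z, hz, rfl⟩ := Set.mem_smul_set.mp hx
      simp only
      rw [real_inner_smul_left]
      exact mul_le_mul_of_nonneg_left (hg.2 ⟨z, hz, rfl⟩) hcpos.le
  -- polar of L and its volume
  have hpolarL : polarBody L = c⁻¹ • polarBody K := by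
    ext y
    rw [mem_inv_smul_set_iff₀ hcpos.ne']
    simp only [polarBody, Set.mem_setOf_eq]
    constructor
    · intro hy x hx
      have h := hy (c • x) (Set.smul_mem_smul_set hx)
      rwa [real_inner_smul_left, ← real_inner_smul_right] at h
    · intro hy x hx
      obtain ⟨z, hz, rfl⟩ := Set.mem_smul_set.mp hx
      have h := hy z hz
      rwa [real_inner_smul_right, ← real_inner_smul_left] at h
  have hvolL : volume (polarBody L) = unitBallVol n := by
    rw [hpolarL, Measure.addHaar_smul, finrank_euclideanSpace_fin, ← hv]
    have h1 : |(c⁻¹) ^ n| = (c ^ n)⁻¹ := by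
      rw [abs_of_nonneg (by positivity), inv_pow]
    have h3 : ENNReal.ofReal ((unitBallVol n).toReal / v.toReal) * v = unitBallVol n := by
      rw [ENNReal.ofReal_div_of_pos hvR0, ENNReal.ofReal_toReal hωtop,
        ENNReal.ofReal_toReal hvtop, ENNReal.div_mul_cancel hv0 hvtop]
    rw [h1, hcpow, inv_div, h3]
  -- the integral
  set g : Sph n → ℝ := fun w => φ (c * max 1 (R * inner ℝ u₁ (w : E n))) with hgdef
  have hMfpos : ∀ w : Sph n, 0 < c * max 1 (R * (inner ℝ u₁ (w : E n) : ℝ)) := fun w =>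
    mul_pos hcpos (lt_of_lt_of_le one_pos (le_max_left _ _))
  have hfg : (fun w : Sph n => φ (supportFn L (w : E n))) = g := by
    funext w
    have hw : ‖(w : E n)‖ = 1 := by
      have := w.2; rwa [mem_sphere_zero_iff_norm] at this
    rw [hsuppL _ hw]
  have hgc : Continuous g := by
    apply hφc.comp_continuous
    · exact continuous_const.mul (continuous_const.max
        (continuous_const.mul (Continuous.inner continuous_const continuous_subtype_val)))
    · exact fun w => mem_Ioi.mpr (hMfpos w)
  have hgint : ∀ i : Fin m, Integrable g (ENNReal.ofReal (lam i) • Measure.dirac (u i)) :=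
    fun i => (hgc.integrable_of_hasCompactSupport
      (HasCompactSupport.of_compactSpace g)).smul_measure ENNReal.ofReal_ne_top
  have hint : ∫ w : Sph n, φ (supportFn L (w : E n)) ∂μ = ∑ i : Fin m, lam i * g (u i) := by
    rw [hfg, hμ, integral_finset_sum_measure (fun i _ => hgint i)]
    refine Finset.sum_congr rfl fun i _ => ?_
    rw [integral_smul_measure, integral_dirac, ENNReal.toReal_ofReal (hlam i).le,
      smul_eq_mul]
  have hgpos : ∀ i : Fin m, 0 ≤ lam i * g (u i) := fun i =>
    mul_nonneg (hlam i).le (hφpos _ (mem_Ioi.mpr (hMfpos _))).le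
  have hkey : C < lam i₀ * g (u i₀) := by
    have hinner : (inner ℝ u₁ ((u i₀ : E n)) : ℝ) = 1 := by
      rw [← hu₁def, real_inner_self_eq_norm_mul_norm, hu₁, one_mul]
    have hval : g (u i₀) = φ (c * R) := by
      rw [hgdef]
      simp only
      rw [hinner, mul_one, max_eq_right hR1]
    rw [hval]
    have hcR : t₀ ≤ c * R := by
      have h1 : (2:ℝ)⁻¹ * R ≤ c * R := mul_le_mul_of_nonneg_right hchalf hR0.le
      have h2 : (2:ℝ)⁻¹ * R = max t₀ 1 := by rw [hRdef]; ring
      have h3 : t₀ ≤ max t₀ 1 := le_max_left _ _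
      linarith
    have hφM : M ≤ φ (c * R) := ht₀ (c * R) hcR
    have h4 : lam i₀ * M = max C 0 + 1 := by
      rw [hM, mul_div_cancel₀ _ hlam₀.ne']
    have h5 : C ≤ max C 0 := le_max_left _ _
    nlinarith
  refine ⟨L, hbody, hvolL, ?_⟩
  rw [hint]
  calc C < lam i₀ * g (u i₀) := hkey
    _ ≤ ∑ i : Fin m, lam i * g (u i) :=
        Finset.single_le_sum (fun i _ => hgpos i) (Finset.mem_univ i₀)
end
end
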